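/- arXiv:2008.06025 — 3 statements merged into one kernel-verified Lean document; each statement's English description precedes it below -/
import Mathlib

section
/- For every integer d ≥ 2, every nonempty sibling σ_d-invariant lamination contains a leaf ℓ with |ℓ| ≥ 1/(d+1). -/
noncomputable section

open Filter Metric

/-- Points of the unit circle `S`. -/
abbrev SPt : Type := {z : ℂ // ‖z‖ = 1}

/-- The unit circle, as a subset of `ℂ`. -/
def circleSet : Set ℂ := {z : ℂ | ‖z‖ = 1}

/-- The open unit disk `D`. -/
def openDisk : Set ℂ := Metric.ball (0 : ℂ) 1

/-- The map `σ_d : S → S`, `z ↦ z ^ d`. -/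
def sigmaS (d : ℕ) (z : SPt) : SPt :=
  ⟨(z : ℂ) ^ d, by rw [norm_pow, z.2, one_pow]⟩

/-- A chord, identified with the unordered pair of its endpoints. -/
abbrev Chord : Type := Sym2 SPt

/-- The closed straight segment in `ℂ` spanned by a chord. -/
def chordSet : Chord → Set ℂ :=
  Sym2.lift ⟨fun a b => segment ℝ (a : ℂ) (b : ℂ), fun a b => segment_symm ℝ _ _⟩

/-- The image chord `σ_d(ℓ)`. -/
def chordMap (d : ℕ) : Chord → Chord := Sym2.map (sigmaS d)

/-- Two (distinct) chords cross if they intersect in the open unit disk. -/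
def Cross (c₁ c₂ : Chord) : Prop :=
  c₁ ≠ c₂ ∧ (chordSet c₁ ∩ chordSet c₂ ∩ openDisk).Nonempty

/-- The length `|ℓ|` of a chord: the normalized length of the shorter arc
subtended by its endpoints (total circle length 1). -/
def chordLength : Chord → ℝ :=
  Sym2.lift ⟨fun a b => |Complex.arg ((a : ℂ) / (b : ℂ))| / (2 * Real.pi), by
    intro a b
    dsimp only
    have h : ((b : ℂ) / (a : ℂ)) = ((a : ℂ) / (b : ℂ))⁻¹ := (inv_div _ _).symm
    rw [h, Complex.arg_inv]
    split_ifs with hpi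
    · rw [hpi]
    · rw [abs_neg]⟩

/-- A lamination: a family of pairwise non-crossing chords containing all
degenerate chords, whose union is compact. -/
structure Lamination : Type where
  leaves : Set Chord
  no_cross : ∀ ℓ₁ ∈ leaves, ∀ ℓ₂ ∈ leaves, ¬ Cross ℓ₁ ℓ₂
  diag_mem : ∀ z : SPt, Sym2.diag z ∈ leaves
  plus_compact : IsCompact (⋃ ℓ ∈ leaves, chordSet ℓ)

/-- `Λ⁺`, the union of all leaves of `Λ`. -/
def Lamination.plus (Λ : Lamination) : Set ℂ := ⋃ ℓ ∈ Λ.leaves, chordSet ℓ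

/-- Sibling `σ_d`-invariance of a lamination. -/
def Lamination.Invariant (Λ : Lamination) (d : ℕ) : Prop :=
  (∀ ℓ ∈ Λ.leaves, chordMap d ℓ ∈ Λ.leaves) ∧
  (∀ ℓ ∈ Λ.leaves, ∃ p ∈ Λ.leaves, chordMap d p = ℓ) ∧
  (∀ ℓ ∈ Λ.leaves, ¬ (chordMap d ℓ).IsDiag →
    ∃ s : Fin d → Chord, (∃ i, s i = ℓ) ∧ (∀ i, s i ∈ Λ.leaves) ∧
      Function.Injective s ∧
      (∀ i j, i ≠ j → chordSet (s i) ∩ chordSet (s j) = ∅) ∧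
      (∀ i, chordMap d (s i) = chordMap d ℓ))

/-- A lamination is nonempty if it has a nondegenerate leaf. -/
def Lamination.NonemptyLam (Λ : Lamination) : Prop := ∃ ℓ ∈ Λ.leaves, ¬ ℓ.IsDiag

/-- A gap of `Λ`: the closure of a connected component of `D ∖ Λ⁺`. -/
def IsGap (Λ : Lamination) (G : Set ℂ) : Prop :=
  ∃ x ∈ openDisk \ Λ.plus, G = closure (connectedComponentIn (openDisk \ Λ.plus) x)

/-- A finite gap: a gap meeting the circle in finitely many points. -/
def FiniteGap (Λ : Lamination) (G : Set ℂ) : Prop := IsGap Λ G ∧ (G ∩ circleSet).Finite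

/-- `ℓ` is an edge of `G`: a maximal nondegenerate straight segment (with
endpoints on the circle) contained in the boundary of `G`. -/
def IsEdge (G : Set ℂ) (ℓ : Chord) : Prop :=
  ¬ ℓ.IsDiag ∧ chordSet ℓ ⊆ frontier G ∧
    ∀ ℓ' : Chord, chordSet ℓ ⊆ chordSet ℓ' → chordSet ℓ' ⊆ frontier G →
      chordSet ℓ' = chordSet ℓ

/-- `σ_d(G)` for a set `G`: the convex hull of the image of `G ∩ S`. -/
def gapImage (d : ℕ) (G : Set ℂ) : Set ℂ :=
  convexHull ℝ ((fun z : ℂ => z ^ d) '' (G ∩ circleSet))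

/-- A lap of `Λ`: a finite gap, or (the segment of) a nondegenerate leaf not
contained in the boundary of a finite gap. -/
def IsLap (Λ : Lamination) (G : Set ℂ) : Prop :=
  FiniteGap Λ G ∨
    ∃ ℓ ∈ Λ.leaves, ¬ ℓ.IsDiag ∧ G = chordSet ℓ ∧
      ∀ H : Set ℂ, FiniteGap Λ H → ¬ chordSet ℓ ⊆ frontier H

/-- Distance between chords (Hausdorff distance between their segments). -/
def chordDist (c₁ c₂ : Chord) : ℝ := Metric.hausdorffDist (chordSet c₁) (chordSet c₂)

/-- Hausdorff convergence `Λ_i → Λ` of laminations (leaf sets converge in the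
Hausdorff metric on the compact space of chords). -/
def LamTendsto (Λi : ℕ → Lamination) (Λ : Lamination) : Prop :=
  ∀ ε > (0 : ℝ), ∀ᶠ n in atTop,
    (∀ ℓ ∈ (Λi n).leaves, ∃ ℓ' ∈ Λ.leaves, chordDist ℓ ℓ' < ε) ∧
    (∀ ℓ' ∈ Λ.leaves, ∃ ℓ ∈ (Λi n).leaves, chordDist ℓ ℓ' < ε)

/-- An isolated leaf of `Λ`: some neighborhood of it in the space of chords
contains no other leaf of `Λ`. -/
def IsolatedLeaf (Λ : Lamination) (ℓ : Chord) : Prop :=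
  ℓ ∈ Λ.leaves ∧ ∃ ε > (0 : ℝ), ∀ ℓ' ∈ Λ.leaves, chordDist ℓ' ℓ < ε → ℓ' = ℓ

/-- A perfect lamination: no isolated leaves. -/
def Lamination.PerfectLam (Λ : Lamination) : Prop := ∀ ℓ ∈ Λ.leaves, ¬ IsolatedLeaf Λ ℓ

/-- A set of chords closed under limits. -/
def ClosedChordSet (P : Set Chord) : Prop :=
  ∀ f : ℕ → Chord, (∀ n, f n ∈ P) → ∀ c : Chord,
    Tendsto (fun n => chordDist (f n) c) atTop (nhds 0) → c ∈ P

/-- A perfect set of chords: closed and with no isolated points. -/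
def PerfectChordSet (P : Set Chord) : Prop :=
  ClosedChordSet P ∧ ∀ c ∈ P, ∀ ε > (0 : ℝ), ∃ c' ∈ P, c' ≠ c ∧ chordDist c c' < ε

/-- The perfect part `Λᵖ` of `Λ`: the maximal perfect subset of its leaf set. -/
def perfectPart (Λ : Lamination) : Set Chord :=
  ⋃₀ {P : Set Chord | P ⊆ Λ.leaves ∧ PerfectChordSet P}

/-- A countable lamination: countably many nondegenerate leaves. -/
def Lamination.CountableLam (Λ : Lamination) : Prop :=
  {ℓ ∈ Λ.leaves | ¬ ℓ.IsDiag}.Countable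

/-- `Λc` is a chief of `Λ`: a minimal-by-inclusion nonempty sibling
`σ_d`-invariant sublamination of `Λ`. -/
def IsChiefOf (d : ℕ) (Λc Λ : Lamination) : Prop :=
  Λc.leaves ⊆ Λ.leaves ∧ Λc.Invariant d ∧ Λc.NonemptyLam ∧
    ∀ Λ' : Lamination, Λ'.leaves ⊆ Λc.leaves → Λ'.Invariant d → Λ'.NonemptyLam →
      Λ'.leaves = Λc.leaves

/-- A clean lamination: distinct non-disjoint leaves lie on the boundary of a
common finite gap. -/
def Lamination.Clean (Λ : Lamination) : Prop :=
  ∀ ℓ₁ ∈ Λ.leaves, ∀ ℓ₂ ∈ Λ.leaves, ℓ₁ ≠ ℓ₂ → (chordSet ℓ₁ ∩ chordSet ℓ₂).Nonempty →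
    ∃ G : Set ℂ, FiniteGap Λ G ∧ chordSet ℓ₁ ⊆ frontier G ∧ chordSet ℓ₂ ⊆ frontier G

/-- A limit lamination: a sibling `σ_3`-invariant lamination that is a limit of
clean sibling `σ_3`-invariant laminations. -/
def IsLimitLam (Λ : Lamination) : Prop :=
  Λ.Invariant 3 ∧
    ∃ Λi : ℕ → Lamination, (∀ n, (Λi n).Invariant 3 ∧ (Λi n).Clean) ∧ LamTendsto Λi Λ

/-- A chief: a chief of some nonempty limit lamination. -/
def IsChief (Λc : Lamination) : Prop :=
  ∃ Λ : Lamination, IsLimitLam Λ ∧ Λ.NonemptyLam ∧ IsChiefOf 3 Λc Λ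

/-- A `σ_3`-critical chord. -/
def IsCritChord (c : Chord) : Prop := ¬ c.IsDiag ∧ (chordMap 3 c).IsDiag

/-- An unordered pair of chords (candidate critical portrait). -/
abbrev Portrait : Type := Sym2 Chord

/-- A cubic critical portrait: an unordered pair of non-crossing
`σ_3`-critical chords. -/
def IsPortrait (K : Portrait) : Prop :=
  ∃ c y : Chord, K = s(c, y) ∧ IsCritChord c ∧ IsCritChord y ∧ ¬ Cross c y

/-- The space `CrP` of all cubic critical portraits. -/
def CrP : Set Portrait := {K | IsPortrait K}

/-- `I(ℓ)` for a critical chord `ℓ`: the open arc of length 1/3 cut off by `ℓ`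
(the points of the circle strictly separated from the center by `ℓ`). -/
def Iarc (ℓ : Chord) : Set SPt :=
  {z : SPt | (z : ℂ) ∉ chordSet ℓ ∧ (segment ℝ (0 : ℂ) (z : ℂ) ∩ chordSet ℓ).Nonempty}

/-- The forward orbit `{σ_3ⁿ(ℓ) : n ≥ 1}` of a critical chord `ℓ` (each image
is a single point of the circle). -/
def critOrbit (ℓ : Chord) : Set SPt :=
  {z : SPt | ∃ n, 1 ≤ n ∧ ∃ a ∈ ℓ, (sigmaS 3)^[n] a = z}

/-- A weak critical portrait. -/
def IsWeak (K : Portrait) : Prop :=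
  IsPortrait K ∧ ∃ c y : Chord, K = s(c, y) ∧
    (critOrbit c ∩ Iarc y = ∅ ∨ critOrbit y ∩ Iarc c = ∅)

/-- A strong critical portrait. -/
def IsStrong (K : Portrait) : Prop := IsPortrait K ∧ ¬ IsWeak K

/-- Distance between (critical) portraits, metrizing convergence of the
unordered pairs of chords. -/
def portraitDist : Portrait → Portrait → ℝ :=
  Sym2.lift₂ ⟨fun a b c d =>
      min (max (chordDist a c) (chordDist b d)) (max (chordDist a d) (chordDist b c)), by
    intro a₁ a₂ b₁ b₂
    constructor
    · dsimp only
      rw [min_comm, max_comm (chordDist a₁ b₂), max_comm (chordDist a₁ b₁)]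
    · dsimp only
      rw [min_comm]⟩

/-- Convergence `K_i → K` in `CrP`. -/
def PortraitTendsto (f : ℕ → Portrait) (K : Portrait) : Prop :=
  Tendsto (fun n => portraitDist (f n) K) atTop (nhds 0)

/-- A critical portrait is compatible with a lamination if none of its chords
crosses a leaf. -/
def Compat (K : Portrait) (Λ : Lamination) : Prop :=
  ∀ c ∈ K, ∀ ℓ ∈ Λ.leaves, ¬ Cross c ℓ

/-- `C(Λ)`: the set of critical portraits compatible with `Λ`. -/
def CC (Λ : Lamination) : Set Portrait := {K | K ∈ CrP ∧ Compat K Λ}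

/-- Friendship of critical portraits: both compatible with a common nonempty
limit lamination. -/
def Friends (K₁ K₂ : Portrait) : Prop :=
  ∃ Λ : Lamination, IsLimitLam Λ ∧ Λ.NonemptyLam ∧ K₁ ∈ CC Λ ∧ K₂ ∈ CC Λ

/-- A prime critical portrait: some friend of it has a weak friend. -/
def IsPrime (K : Portrait) : Prop :=
  ∃ K' K'' : Portrait, Friends K K' ∧ Friends K' K'' ∧ IsWeak K''

/-- A regular chief: a chief all of whose critical portraits have only strong
friends. -/
def RegularChief (Λ : Lamination) : Prop :=
  IsChief Λ ∧ ∀ K ∈ CC Λ, ∀ K' : Portrait, Friends K K' → IsStrong K'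

/-- A regular lamination: one having a regular chief. -/
def RegularLam (Λ : Lamination) : Prop :=
  ∃ Λc : Lamination, IsChiefOf 3 Λc Λ ∧ RegularChief Λc

/-- A regular critical portrait: one compatible with a regular chief. -/
def RegularPortrait (K : Portrait) : Prop :=
  ∃ Λ : Lamination, RegularChief Λ ∧ K ∈ CC Λ

/-- Rotation of a circle point by angle `2πt`. -/
def rotPt (t : ℝ) (a : SPt) : SPt :=
  ⟨Complex.exp ((t * (2 * Real.pi) : ℝ) * Complex.I) * (a : ℂ), by
    rw [norm_mul, a.2, mul_one, Complex.norm_exp_ofReal_mul_I]⟩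

/-- Circular betweenness: `b` lies on the (closed) counterclockwise arc from
`a` to `c` (and `a`, `b`, `c` occur in this counterclockwise order). -/
def CBtw (a b c : SPt) : Prop :=
  ∃ s t : ℝ, 0 ≤ s ∧ s ≤ t ∧ t < 1 ∧ b = rotPt s a ∧ c = rotPt t a

/-- An invariant gap: a gap `G` of some sibling `σ_3`-invariant lamination
with `σ_3(G) = G`. -/
def IsInvGap (G : Set ℂ) : Prop :=
  ∃ Λ : Lamination, Λ.Invariant 3 ∧ IsGap Λ G ∧ gapImage 3 G = G

/-- An infinite gap (meets the circle in infinitely many points). -/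
def InfiniteGapSet (G : Set ℂ) : Prop := (G ∩ circleSet).Infinite

/-- Two circle points lie in the closure of a common complementary arc of
`G ∩ S` (or coincide): the fibers of the edge-collapsing map of `∂G`. -/
def complArcFiber (G : Set ℂ) (z w : SPt) : Prop :=
  z = w ∨ ∃ x : SPt, (x : ℂ) ∉ G ∧
    z ∈ closure (connectedComponentIn {y : SPt | (y : ℂ) ∉ G} x) ∧
    w ∈ closure (connectedComponentIn {y : SPt | (y : ℂ) ∉ G} x)

/-- A quadratic invariant gap: an infinite invariant gap of degree 2, i.e.
after collapsing the complementary arcs (edges) of its boundary, `σ_3` induces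
a two-to-one covering map of the circle. -/
def QuadGap (G : Set ℂ) : Prop :=
  IsInvGap G ∧ InfiniteGapSet G ∧
    ∃ φ : SPt → SPt, Continuous φ ∧ Function.Surjective φ ∧
      (∀ z w : SPt, φ z = φ w ↔ complArcFiber G z w) ∧
      ∃ g : SPt → SPt, IsCoveringMap g ∧ (∀ w : SPt, Nat.card (g ⁻¹' {w}) = 2) ∧
        ∀ z : SPt, (z : ℂ) ∈ G → φ (sigmaS 3 z) = g (φ z)

/-- A critical portrait is compatible with a gap if none of its chords crosses
an edge of the gap. -/
def CompatGap (K : Portrait) (G : Set ℂ) : Prop :=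
  ∀ c ∈ K, ∀ ℓ : Chord, IsEdge G ℓ → ¬ Cross c ℓ

/-- A set of portraits closed in `CrP`. -/
def ClosedPortraitSet (A : Set Portrait) : Prop :=
  ∀ f : ℕ → Portrait, (∀ n, f n ∈ A) → ∀ K ∈ CrP, PortraitTendsto f K → K ∈ A

/-- A finite rotational lap: a finite lap on which `σ_3` acts as a
combinatorial rotation of the vertices. -/
def RotationalLap (Λ : Lamination) (G : Set ℂ) : Prop :=
  IsLap Λ G ∧ (G ∩ circleSet).Finite ∧ gapImage 3 G = G ∧
    (∀ z : SPt, (z : ℂ) ∈ G → ((sigmaS 3 z : SPt) : ℂ) ∈ G) ∧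
    ∀ a b c : SPt, (a : ℂ) ∈ G → (b : ℂ) ∈ G → (c : ℂ) ∈ G →
      CBtw a b c → CBtw (sigmaS 3 a) (sigmaS 3 b) (sigmaS 3 c)

section Stmt0Aux

open Complex Real

private theorem toIocMod_abs_bound (x : ℝ) (h : |x| < 2 * π) :
    min |x| (2 * π - |x|) ≤ |toIocMod (mul_pos two_pos Real.pi_pos) (-π) x| := by
  set k := toIocDiv (mul_pos two_pos Real.pi_pos) (-π) x with hkdef
  have hmod : toIocMod (mul_pos two_pos Real.pi_pos) (-π) x = x - k • (2 * π) := rfl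
  have hmem := toIocMod_mem_Ioc (mul_pos two_pos Real.pi_pos) (-π) x
  rw [hmod] at hmem ⊢
  have hπ : (0:ℝ) < π := Real.pi_pos
  have habs : |x - k • (2 * π)| ≤ π := by
    rw [abs_le]; exact ⟨by linarith [hmem.1], by linarith [hmem.2]⟩
  have hk1 : |(k : ℝ)| < 3/2 := by
    have h1 : |(k:ℝ) * (2*π)| ≤ |x - (k:ℝ) * (2*π)| + |x| := by
      calc |(k:ℝ)*(2*π)| = |x - (x - (k:ℝ)*(2*π))| := by ring_nf
        _ ≤ |x| + |x - (k:ℝ)*(2*π)| := abs_sub _ _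
        _ = |x - (k:ℝ)*(2*π)| + |x| := by ring
    simp only [zsmul_eq_mul] at habs
    rw [abs_mul, abs_of_pos (mul_pos two_pos hπ)] at h1
    nlinarith
  have hk2 : (|k| : ℝ) < 2 := by push_cast; linarith
  have hk3 : |k| ≤ 1 := by exact_mod_cast Int.lt_add_one_iff.mp (by exact_mod_cast hk2)
  have hk : k = -1 ∨ k = 0 ∨ k = 1 := by rw [abs_le] at hk3; omega
  simp only [zsmul_eq_mul]
  clear_value k
  rcases hk with rfl | rfl | rfl
  · push_cast
    have : 2*π - |x| ≤ |x - (-1) * (2*π)| := by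
      cases abs_cases x with
      | inl h => cases abs_cases (x - (-1)*(2*π)) with
        | inl h2 => nlinarith [h.1, h2.1]
        | inr h2 => nlinarith [h2.1]
      | inr h => cases abs_cases (x - (-1)*(2*π)) with
        | inl h2 => nlinarith
        | inr h2 => nlinarith
    exact le_trans (min_le_right _ _) this
  · push_cast; simpa using min_le_left _ _
  · push_cast
    have : 2*π - |x| ≤ |x - 1 * (2*π)| := by
      cases abs_cases x with
      | inl h => cases abs_cases (x - 1*(2*π)) with
        | inl h2 => nlinarith
        | inr h2 => nlinarith
      | inr h => cases abs_cases (x - 1*(2*π)) with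
        | inl h2 => nlinarith
        | inr h2 => nlinarith
    exact le_trans (min_le_right _ _) this

private theorem abs_arg_pow_bound (d : ℕ) (hd : 2 ≤ d) (w : ℂ) (hw : ‖w‖ = 1)
    (h : |Complex.arg w| < 2 * π / (d + 1)) :
    min (2 * |Complex.arg w|) (2 * π / (d + 1)) ≤ |Complex.arg (w ^ d)| := by
  have hπ : (0:ℝ) < π := Real.pi_pos
  set θ := Complex.arg w with hθ
  have hwne : w = Complex.exp (θ * Complex.I) := by
    have := Complex.norm_mul_exp_arg_mul_I w
    rw [hw] at this
    simpa using this.symm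
  have hpow : w ^ d = Complex.exp ((d * θ : ℝ) * Complex.I) := by
    rw [hwne, ← Complex.exp_nat_mul]; congr 1; push_cast; ring
  have hargpow : Complex.arg (w ^ d) = toIocMod (mul_pos two_pos Real.pi_pos) (-π) (d * θ) := by
    rw [hpow, Complex.arg_exp_mul_I]
  have hd1 : (0:ℝ) < (d:ℝ) + 1 := by positivity
  have hdpos : (0:ℝ) < (d:ℝ) := by exact_mod_cast lt_of_lt_of_le two_pos hd
  have hdθ : |(d:ℝ) * θ| < 2 * π := by
    rw [abs_mul, _root_.abs_of_nonneg (by positivity : (0:ℝ) ≤ (d:ℝ))]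
    calc (d:ℝ) * |θ| < (d:ℝ) * (2*π/((d:ℝ)+1)) := by
          rcases eq_or_lt_of_le (abs_nonneg θ) with h0 | h0
          · rw [← h0, mul_zero]; exact mul_pos hdpos (by positivity)
          · exact mul_lt_mul_of_pos_left h hdpos
      _ < 2 * π := by
          rw [mul_div_assoc', div_lt_iff₀ hd1]; nlinarith
  have key := toIocMod_abs_bound ((d:ℝ) * θ) hdθ
  rw [hargpow]
  refine le_trans ?_ key
  rw [abs_mul, _root_.abs_of_nonneg (by positivity : (0:ℝ) ≤ (d:ℝ))]
  have hd2 : (2:ℝ) ≤ (d:ℝ) := by exact_mod_cast hd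
  have hq : (2*π/((d:ℝ)+1)) * ((d:ℝ)+1) = 2*π := div_mul_cancel₀ _ (ne_of_gt hd1)
  have hdq : (d:ℝ) * |θ| ≤ (d:ℝ) * (2*π/((d:ℝ)+1)) := mul_le_mul_of_nonneg_left h.le hdpos.le
  apply le_min
  · exact le_trans (min_le_left _ _) (by nlinarith [abs_nonneg θ])
  · exact le_trans (min_le_right _ _) (by nlinarith)

end Stmt0Aux

section Stmt0Aux2

private lemma sPt_ne_zero (a : SPt) : (a : ℂ) ≠ 0 := by
  intro h
  have := a.2
  rw [h, norm_zero] at this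
  norm_num at this

private lemma chordLength_mk (a b : SPt) :
    chordLength s(a, b) = |Complex.arg ((a : ℂ) / (b : ℂ))| / (2 * Real.pi) := rfl

private lemma chordLength_nonneg (ℓ : Chord) : 0 ≤ chordLength ℓ := by
  induction ℓ using Sym2.ind with
  | _ a b => rw [chordLength_mk]; positivity

private lemma chordLength_pos (ℓ : Chord) (h : ¬ ℓ.IsDiag) : 0 < chordLength ℓ := by
  induction ℓ using Sym2.ind with
  | _ a b =>
    rw [Sym2.mk_isDiag_iff] at h
    rw [chordLength_mk]
    have hw : ‖(a : ℂ) / (b : ℂ)‖ = 1 := by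
      rw [norm_div]
      rw [a.2, b.2]
      norm_num
    have harg : Complex.arg ((a : ℂ) / (b : ℂ)) ≠ 0 := by
      intro h0
      have h1 : ((a : ℂ) / (b : ℂ)) = 1 := by
        apply Complex.ext_norm_arg
        · rw [hw, norm_one]
        · rw [h0, Complex.arg_one]
      rw [div_eq_one_iff_eq (sPt_ne_zero b)] at h1
      exact h (Subtype.ext h1)
    have : 0 < |Complex.arg ((a : ℂ) / (b : ℂ))| := abs_pos.mpr harg
    positivity

private lemma chordLength_grow (d : ℕ) (hd : 2 ≤ d) (ℓ : Chord)
    (h : chordLength ℓ < 1 / ((d : ℝ) + 1)) :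
    min (2 * chordLength ℓ) (1 / ((d : ℝ) + 1)) ≤ chordLength (chordMap d ℓ) := by
  induction ℓ using Sym2.ind with
  | _ a b =>
    have hπ : (0 : ℝ) < Real.pi := Real.pi_pos
    have hd1 : (0 : ℝ) < (d : ℝ) + 1 := by positivity
    have hmap : chordMap d s(a, b) = s(sigmaS d a, sigmaS d b) := Sym2.map_pair_eq _ _ _
    have hratio : ((sigmaS d a : SPt) : ℂ) / ((sigmaS d b : SPt) : ℂ)
        = ((a : ℂ) / (b : ℂ)) ^ d := by
      simp [sigmaS, div_pow]
    rw [chordLength_mk] at h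
    rw [hmap, chordLength_mk (sigmaS d a) (sigmaS d b), hratio, chordLength_mk]
    set w : ℂ := (a : ℂ) / (b : ℂ) with hwdef
    have hwnorm : ‖w‖ = 1 := by
      rw [hwdef, norm_div, a.2, b.2]; norm_num
    have harg : |Complex.arg w| < 2 * Real.pi / ((d : ℝ) + 1) := by
      rw [div_lt_div_iff₀ (by positivity) hd1] at h
      rw [lt_div_iff₀ hd1]
      linarith
    have key := abs_arg_pow_bound d hd w hwnorm harg
    have h2π : (0 : ℝ) < 2 * Real.pi := by positivity
    refine le_trans ?_ ((div_le_div_iff_of_pos_right h2π).mpr key)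
    rw [← min_div_div_right h2π.le]
    apply min_le_min
    · rw [mul_div_assoc]
    · apply le_of_eq
      field_simp

end Stmt0Aux2

/-- For every integer `d ≥ 2`, every nonempty sibling
`σ_d`-invariant lamination contains a leaf `ℓ` with `|ℓ| ≥ 1/(d+1)`. -/
theorem stmt0 (d : ℕ) (hd : 2 ≤ d) (Λ : Lamination) (hinv : Λ.Invariant d)
    (hne : Λ.NonemptyLam) :
    ∃ ℓ ∈ Λ.leaves, 1 / ((d : ℝ) + 1) ≤ chordLength ℓ := by
  by_contra hcon
  push_neg at hcon
  obtain ⟨ℓ₀, hmem₀, hnd₀⟩ := hne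
  have ht₀ : 0 < chordLength ℓ₀ := chordLength_pos ℓ₀ hnd₀
  set f : ℕ → Chord := fun n => (chordMap d)^[n] ℓ₀ with hf
  have hfmem : ∀ n, f n ∈ Λ.leaves := by
    intro n
    induction n with
    | zero => exact hmem₀
    | succ n ih =>
      have : f (n + 1) = chordMap d (f n) := Function.iterate_succ_apply' _ _ _
      rw [this]
      exact hinv.1 _ ih
  have hgrow : ∀ n, 2 ^ n * chordLength ℓ₀ ≤ chordLength (f n) := by
    intro n
    induction n with
    | zero => simp [hf]
    | succ n ih =>
      have hlt : chordLength (f n) < 1 / ((d : ℝ) + 1) := hcon _ (hfmem n)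
      have hkey := chordLength_grow d hd (f n) hlt
      have hstep : f (n + 1) = chordMap d (f n) := Function.iterate_succ_apply' _ _ _
      rw [hstep]
      have hlt2 : chordLength (chordMap d (f n)) < 1 / ((d : ℝ) + 1) := by
        rw [← hstep]; exact hcon _ (hfmem (n + 1))
      rcases min_cases (2 * chordLength (f n)) (1 / ((d : ℝ) + 1)) with ⟨heq, _⟩ | ⟨heq, _⟩
      · rw [heq] at hkey
        calc 2 ^ (n + 1) * chordLength ℓ₀ = 2 * (2 ^ n * chordLength ℓ₀) := by ring
          _ ≤ 2 * chordLength (f n) := by linarith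
          _ ≤ _ := hkey
      · rw [heq] at hkey
        exact absurd (lt_of_le_of_lt hkey hlt2) (lt_irrefl _)
  obtain ⟨n, hn⟩ := pow_unbounded_of_one_lt ((1 : ℝ) / chordLength ℓ₀) (by norm_num : (1:ℝ) < 2)
  have h1 : chordLength (f n) < 1 := by
    have := hcon _ (hfmem n)
    have hd1 : (1 : ℝ) ≤ (d : ℝ) + 1 := by
      have : (0:ℝ) ≤ (d:ℝ) := Nat.cast_nonneg d
      linarith
    calc chordLength (f n) < 1 / ((d : ℝ) + 1) := this
      _ ≤ 1 := by rw [div_le_one (by linarith)]; linarith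
  have h2 : (1 : ℝ) < 2 ^ n * chordLength ℓ₀ := by
    rw [div_lt_iff₀ ht₀] at hn
    linarith
  linarith [hgrow n]
end
end

section
/- For every integer d ≥ 2, every nonempty sibling σ_d-invariant lamination contains a chief: a nonempty sibling σ_d-invariant sublamination that has no properly smaller nonempty sibling σ_d-invariant sublamination. -/
noncomputable section

open Filter Metric

lemma isCompact_circ : IsCompact {z : ℂ | ‖z‖ = 1} := by
  have : {z : ℂ | ‖z‖ = 1} = Metric.sphere (0:ℂ) 1 := by
    ext z; simp [dist_zero_right]
  rw [this]; exact isCompact_sphere 0 1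

instance : CompactSpace SPt := isCompact_iff_compactSpace.mp isCompact_circ

instance : Nonempty SPt := ⟨⟨1, by simp⟩⟩

lemma normSq_one_of (a : ℂ) (ha : ‖a‖ = 1) : Complex.normSq a = 1 := by
  rw [Complex.normSq_eq_norm_sq, ha]; norm_num

lemma param_normSq (a b : ℂ) (ha : ‖a‖ = 1) (hb : ‖b‖ = 1) (s : ℝ) :
    Complex.normSq (a + (s:ℂ) * (b - a)) = 1 + Complex.normSq (b - a) * (s^2 - s) := by
  have ha' := normSq_one_of a ha
  have hb' := normSq_one_of b hb
  simp only [Complex.normSq_apply] at *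
  simp only [Complex.add_re, Complex.add_im, Complex.mul_re, Complex.mul_im,
    Complex.sub_re, Complex.sub_im, Complex.ofReal_re, Complex.ofReal_im]
  linear_combination (1-s) * ha' + s * hb'

def cross2 (a b z : ℂ) : ℝ := (b-a).re * (z-a).im - (b-a).im * (z-a).re

lemma cross2_affine (a b c e : ℂ) (t : ℝ) :
    cross2 a b (c + (t:ℂ) * (e - c)) = cross2 a b c + t * (cross2 a b e - cross2 a b c) := by
  simp only [cross2, Complex.add_re, Complex.add_im, Complex.mul_re, Complex.mul_im,
    Complex.sub_re, Complex.sub_im, Complex.ofReal_re, Complex.ofReal_im]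
  ring

lemma cross2_mid (a b : ℂ) : cross2 a b ((a + b)/2) = 0 := by
  have h1 : ((a+b)/2 - a) = (b - a)/2 := by ring
  simp only [cross2, h1, Complex.div_re, Complex.div_im, Complex.normSq_apply]
  norm_num
  ring

lemma cross2_zero_param (a b q : ℂ) (hab : a ≠ b) (h : cross2 a b q = 0) :
    ∃ s : ℝ, q = a + (s:ℝ) * (b - a) := by
  have hB : (b.re - a.re) * (b.re - a.re) + (b.im - a.im) * (b.im - a.im) ≠ 0 := by
    have : Complex.normSq (b - a) ≠ 0 := by
      simp only [ne_eq, Complex.normSq_eq_zero, sub_eq_zero]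
      exact fun h' => hab h'.symm
    simpa [Complex.normSq_apply] using this
  simp only [cross2, Complex.sub_re, Complex.sub_im] at h
  refine ⟨((b.re - a.re) * (q.re - a.re) + (b.im - a.im) * (q.im - a.im)) /
    ((b.re - a.re) * (b.re - a.re) + (b.im - a.im) * (b.im - a.im)), ?_⟩
  apply Complex.ext
  · simp only [Complex.add_re, Complex.add_im, Complex.mul_re, Complex.mul_im,
      Complex.ofReal_re, Complex.ofReal_im, Complex.sub_re, Complex.sub_im]
    rw [zero_mul, sub_zero, div_mul_eq_mul_div, add_div' _ _ _ hB, eq_div_iff hB]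
    linear_combination (-(b.im - a.im)) * h
  · simp only [Complex.add_re, Complex.add_im, Complex.mul_re, Complex.mul_im,
      Complex.ofReal_re, Complex.ofReal_im, Complex.sub_re, Complex.sub_im]
    rw [zero_mul, add_zero, div_mul_eq_mul_div, add_div' _ _ _ hB, eq_div_iff hB]
    linear_combination (b.re - a.re) * h

lemma mem_segment_param (a b x : ℂ) :
    x ∈ segment ℝ a b ↔ ∃ t : ℝ, 0 ≤ t ∧ t ≤ 1 ∧ x = a + (t:ℂ) * (b - a) := by
  rw [segment_eq_image']
  constructor
  · rintro ⟨t, ⟨ht0, ht1⟩, rfl⟩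
    exact ⟨t, ht0, ht1, by simp [Complex.real_smul]⟩
  · rintro ⟨t, ht0, ht1, rfl⟩
    exact ⟨t, ⟨ht0, ht1⟩, by simp [Complex.real_smul]⟩

lemma seg_of_cross2_zero {a b q : ℂ} (ha : ‖a‖ = 1) (hb : ‖b‖ = 1) (hab : a ≠ b)
    (hc : cross2 a b q = 0) (hq : ‖q‖ < 1) : q ∈ segment ℝ a b := by
  obtain ⟨s, rfl⟩ := cross2_zero_param a b q hab hc
  have hB : 0 < Complex.normSq (b - a) := by
    rw [Complex.normSq_pos, sub_ne_zero]; exact fun h' => hab h'.symm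
  have hns := param_normSq a b ha hb s
  have hlt : Complex.normSq (a + (s:ℂ) * (b - a)) < 1 := by
    rw [Complex.normSq_eq_norm_sq]
    nlinarith [norm_nonneg (a + (s:ℂ) * (b - a))]
  have hs : s^2 - s < 0 := by nlinarith
  have hs0 : 0 < s := by nlinarith [sq_nonneg s]
  have hs1 : s < 1 := by nlinarith [sq_nonneg (s-1)]
  exact (mem_segment_param a b _).mpr ⟨s, hs0.le, hs1.le, rfl⟩

lemma endpoint_of_cross2_zero {a b c : ℂ} (ha : ‖a‖ = 1) (hb : ‖b‖ = 1) (hcn : ‖c‖ = 1)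
    (hab : a ≠ b) (hc : cross2 a b c = 0) : c = a ∨ c = b := by
  obtain ⟨s, rfl⟩ := cross2_zero_param a b c hab hc
  have hB : 0 < Complex.normSq (b - a) := by
    rw [Complex.normSq_pos, sub_ne_zero]; exact fun h' => hab h'.symm
  have hns := param_normSq a b ha hb s
  have h1 : Complex.normSq (a + (s:ℂ) * (b - a)) = 1 := normSq_one_of _ hcn
  have : s^2 - s = 0 := by nlinarith
  have : s = 0 ∨ s = 1 := by
    rcases mul_eq_zero.mp (by nlinarith : s * (s - 1) = 0) with h | h
    · exact Or.inl h
    · exact Or.inr (by linarith)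
  rcases this with rfl | rfl
  · left; simp
  · right; push_cast; ring

lemma chordSet_mk (a b : SPt) : chordSet s(a, b) = segment ℝ (a:ℂ) (b:ℂ) := rfl

lemma chordMap_mk (d : ℕ) (a b : SPt) : chordMap d s(a, b) = s(sigmaS d a, sigmaS d b) :=
  Sym2.map_pair_eq _ _ _

lemma mid_mem_segment (a b : ℂ) : (a + b)/2 ∈ segment ℝ a b := by
  rw [mem_segment_param]
  exact ⟨1/2, by norm_num, by norm_num, by push_cast; ring⟩

lemma norm_mid_lt {a b : ℂ} (ha : ‖a‖ = 1) (hb : ‖b‖ = 1) (hab : a ≠ b) :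
    ‖(a + b)/2‖ < 1 := by
  have h := param_normSq a b ha hb (1/2)
  have heq : a + ((1:ℝ)/2 : ℝ) * (b - a) = (a + b)/2 := by push_cast; ring
  rw [heq] at h
  have hB : 0 < Complex.normSq (b - a) := by
    rw [Complex.normSq_pos, sub_ne_zero]; exact fun h' => hab h'.symm
  have : Complex.normSq ((a+b)/2) < 1 := by nlinarith
  rw [Complex.normSq_eq_norm_sq] at this
  nlinarith [norm_nonneg ((a+b)/2)]

lemma chordSet_subset_ball (ℓ : Chord) : chordSet ℓ ⊆ Metric.closedBall (0:ℂ) 1 := by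
  induction ℓ using Sym2.ind with
  | _ a b =>
    rw [chordSet_mk]
    apply (convex_closedBall (0:ℂ) 1).segment_subset <;>
      simp [Metric.mem_closedBall, dist_zero_right, a.2, b.2]

lemma tendsto_cross2 {α : Type*} {l : Filter α} {A B : α → ℂ} {a b : ℂ} (z : ℂ)
    (hA : Tendsto A l (nhds a)) (hB : Tendsto B l (nhds b)) :
    Tendsto (fun n => cross2 (A n) (B n) z) l (nhds (cross2 a b z)) := by
  have hc : Continuous fun q : ℂ × ℂ => cross2 q.1 q.2 z := by
    unfold cross2
    continuity
  exact (hc.tendsto (a, b)).comp (hA.prodMk_nhds hB)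

lemma cross_core (Λ : Lamination) (u v : ℕ → SPt) (a b c e : SPt)
    (hu : Tendsto (fun n => ((u n : ℂ))) atTop (nhds (a:ℂ)))
    (hv : Tendsto (fun n => ((v n : ℂ))) atTop (nhds (b:ℂ)))
    (hm : ∀ n, s(u n, v n) ∈ Λ.leaves) (hce : s(c, e) ∈ Λ.leaves)
    (hab : (a:ℂ) ≠ (b:ℂ))
    (hfc : cross2 (a:ℂ) (b:ℂ) (c:ℂ) < 0) (hfe : 0 < cross2 (a:ℂ) (b:ℂ) (e:ℂ))
    (hpseg : ((a:ℂ)+(b:ℂ))/2 ∈ segment ℝ (c:ℂ) (e:ℂ)) :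
    s(a, b) ∈ Λ.leaves := by
  set p : ℂ := ((a:ℂ)+(b:ℂ))/2 with hp
  have hpnorm : ‖p‖ < 1 := norm_mid_lt a.2 b.2 hab
  by_cases hfreq : ∃ᶠ n in atTop, s(u n, v n) = s(c, e)
  · have : ∃ᶠ n in atTop, (u n = c ∧ v n = e) ∨ (u n = e ∧ v n = c) := by
      refine hfreq.mono fun n h => ?_
      rwa [Sym2.eq_iff] at h
    rcases Filter.frequently_or_distrib.mp this with h | h
    · have hac : (a:ℂ) = (c:ℂ) :=
        tendsto_nhds_unique_of_frequently_eq hu tendsto_const_nhds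
          (h.mono fun n hn => by rw [hn.1])
      have hbe : (b:ℂ) = (e:ℂ) :=
        tendsto_nhds_unique_of_frequently_eq hv tendsto_const_nhds
          (h.mono fun n hn => by rw [hn.2])
      have : s(a, b) = s(c, e) := by
        rw [Subtype.ext hac, Subtype.ext hbe]
      rw [this]; exact hce
    · have hac : (a:ℂ) = (e:ℂ) :=
        tendsto_nhds_unique_of_frequently_eq hu tendsto_const_nhds
          (h.mono fun n hn => by rw [hn.1])
      have hbe : (b:ℂ) = (c:ℂ) :=
        tendsto_nhds_unique_of_frequently_eq hv tendsto_const_nhds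
          (h.mono fun n hn => by rw [hn.2])
      have : s(a, b) = s(c, e) := by
        rw [Subtype.ext hac, Subtype.ext hbe, Sym2.eq_swap]
      rw [this]; exact hce
  · exfalso
    have hne : ∀ᶠ n in atTop, s(u n, v n) ≠ s(c, e) := Filter.not_frequently.mp hfreq
    -- the limit crossing parameter
    obtain ⟨t, ht0, ht1, hpt⟩ := (mem_segment_param _ _ _).mp hpseg
    have hfp : cross2 (a:ℂ) (b:ℂ) p = 0 := cross2_mid _ _
    have heq : cross2 (a:ℂ) (b:ℂ) (c:ℂ)
        + t * (cross2 (a:ℂ) (b:ℂ) (e:ℂ) - cross2 (a:ℂ) (b:ℂ) (c:ℂ)) = 0 := by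
      rw [← cross2_affine, ← hpt]; exact hfp
    set F : ℝ := cross2 (a:ℂ) (b:ℂ) (c:ℂ)
    set G : ℝ := cross2 (a:ℂ) (b:ℂ) (e:ℂ)
    have hFG : F - G ≠ 0 := by intro h; simp only [sub_eq_zero] at h; linarith
    have htval : t = F / (F - G) := by field_simp; linarith
    -- sequences
    set Fn : ℕ → ℝ := fun n => cross2 ((u n):ℂ) ((v n):ℂ) (c:ℂ) with hFn
    set Gn : ℕ → ℝ := fun n => cross2 ((u n):ℂ) ((v n):ℂ) (e:ℂ) with hGn
    have hFt : Tendsto Fn atTop (nhds F) := tendsto_cross2 _ hu hv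
    have hGt : Tendsto Gn atTop (nhds G) := tendsto_cross2 _ hu hv
    set tn : ℕ → ℝ := fun n => Fn n / (Fn n - Gn n) with htn
    have htt : Tendsto tn atTop (nhds t) := by
      rw [htval]
      exact hFt.div (hFt.sub hGt) hFG
    set qn : ℕ → ℂ := fun n => (c:ℂ) + ((tn n : ℝ):ℂ) * ((e:ℂ) - (c:ℂ)) with hqn
    have hqt : Tendsto qn atTop (nhds p) := by
      rw [hpt]
      exact tendsto_const_nhds.add
        (((Complex.continuous_ofReal.tendsto t).comp htt).mul tendsto_const_nhds)
    have E1 : ∀ᶠ n in atTop, Fn n < 0 := hFt.eventually_lt_const hfc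
    have E2 : ∀ᶠ n in atTop, 0 < Gn n := hGt.eventually_const_lt hfe
    have E3 : ∀ᶠ n in atTop, ‖qn n‖ < 1 :=
      ((continuous_norm.tendsto p).comp hqt).eventually_lt_const hpnorm
    have E4 : ∀ᶠ n in atTop, ((u n):ℂ) ≠ ((v n):ℂ) := by
      have : Tendsto (fun n => ‖((u n):ℂ) - ((v n):ℂ)‖) atTop (nhds ‖(a:ℂ) - (b:ℂ)‖) :=
        (continuous_norm.tendsto _).comp (hu.sub hv)
      have h0 : (0:ℝ) < ‖(a:ℂ) - (b:ℂ)‖ := by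
        rw [norm_pos_iff, sub_ne_zero]; exact hab
      exact (this.eventually_const_lt h0).mono fun n hn => by
        intro h; rw [h] at hn; simp at hn
    obtain ⟨n, h1, h2, h3, h4, h5⟩ := (E1.and (E2.and (E3.and (E4.and hne)))).exists
    -- qn n is a crossing point
    have hden : Fn n - Gn n ≠ 0 := by intro h; rw [sub_eq_zero] at h; linarith
    have hcrossq : cross2 ((u n):ℂ) ((v n):ℂ) (qn n) = 0 := by
      rw [hqn]
      rw [cross2_affine]
      show Fn n + tn n * (Gn n - Fn n) = 0
      rw [htn]
      field_simp
      ring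
    have ht0' : 0 < tn n := by
      rw [htn]
      apply div_pos_of_neg_of_neg h1
      linarith
    have ht1' : tn n < 1 := by
      rw [htn, div_lt_one_of_neg] <;> linarith
    have hq_ce : qn n ∈ segment ℝ (c:ℂ) (e:ℂ) :=
      (mem_segment_param _ _ _).mpr ⟨tn n, ht0'.le, ht1'.le, rfl⟩
    have hq_uv : qn n ∈ segment ℝ ((u n):ℂ) ((v n):ℂ) :=
      seg_of_cross2_zero (u n).2 (v n).2 h4 hcrossq h3
    have : Cross s(u n, v n) s(c, e) := by
      refine ⟨h5, ⟨qn n, ⟨⟨?_, ?_⟩, ?_⟩⟩⟩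
      · rwa [chordSet_mk]
      · rwa [chordSet_mk]
      · rw [openDisk, Metric.mem_ball, dist_zero_right]; exact h3
    exact Λ.no_cross _ (hm n) _ hce this

lemma same_sign_absurd {F G t : ℝ} (ht0 : 0 ≤ t) (ht1 : t ≤ 1)
    (heq : F + t * (G - F) = 0) (hF : F < 0) (hG : G < 0) : False := by
  have hx : (1 - t) * F ≤ 0 := mul_nonpos_of_nonneg_of_nonpos (by linarith) hF.le
  have hy : t * G ≤ 0 := mul_nonpos_of_nonneg_of_nonpos ht0 hG.le
  have hsum : (1 - t) * F + t * G = 0 := by linarith [heq]; 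
  have hx0 : (1 - t) * F = 0 := by nlinarith
  have hy0 : t * G = 0 := by nlinarith
  rcases mul_eq_zero.mp hx0 with h | h
  · rcases mul_eq_zero.mp hy0 with h' | h'
    · linarith
    · linarith
  · linarith

/-- Leaf sets of laminations are closed under (endpoint-wise) limits. -/
lemma lam_leaves_seqClosed (Λ : Lamination) (u v : ℕ → SPt) (a b : SPt)
    (hu : Tendsto (fun n => ((u n : ℂ))) atTop (nhds (a:ℂ)))
    (hv : Tendsto (fun n => ((v n : ℂ))) atTop (nhds (b:ℂ)))
    (hm : ∀ n, s(u n, v n) ∈ Λ.leaves) : s(a, b) ∈ Λ.leaves := by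
  by_cases hab : a = b
  · rw [hab]
    exact Λ.diag_mem b
  have hab' : (a:ℂ) ≠ (b:ℂ) := fun h => hab (Subtype.ext h)
  set p : ℂ := ((a:ℂ)+(b:ℂ))/2 with hpdef
  have hpnorm : ‖p‖ < 1 := norm_mid_lt a.2 b.2 hab'
  -- p belongs to the (closed) union of all leaves
  have hplus : p ∈ ⋃ ℓ ∈ Λ.leaves, chordSet ℓ := by
    have hcl : IsClosed (⋃ ℓ ∈ Λ.leaves, chordSet ℓ) := Λ.plus_compact.isClosed
    have htend : Tendsto (fun n => (((u n):ℂ) + ((v n):ℂ))/2) atTop (nhds p) :=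
      (hu.add hv).div_const 2
    refine hcl.mem_of_tendsto htend (Filter.Eventually.of_forall fun n => ?_)
    exact Set.mem_biUnion (hm n) (by rw [chordSet_mk]; exact mid_mem_segment _ _)
  rw [Set.mem_iUnion₂] at hplus
  obtain ⟨m, hmL, hpm⟩ := hplus
  induction m using Sym2.ind with
  | _ c e =>
  rw [chordSet_mk] at hpm
  -- degenerate covering chord is impossible
  by_cases hce : (c:ℂ) = (e:ℂ)
  · rw [hce, segment_same] at hpm
    rw [Set.mem_singleton_iff] at hpm
    rw [hpm] at hpnorm
    rw [e.2] at hpnorm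
    norm_num at hpnorm
  -- the crossing function
  obtain ⟨t, ht0, ht1, hpt⟩ := (mem_segment_param _ _ _).mp hpm
  have hfp : cross2 (a:ℂ) (b:ℂ) p = 0 := cross2_mid _ _
  have heq : cross2 (a:ℂ) (b:ℂ) (c:ℂ)
      + t * (cross2 (a:ℂ) (b:ℂ) (e:ℂ) - cross2 (a:ℂ) (b:ℂ) (c:ℂ)) = 0 := by
    rw [← cross2_affine, ← hpt]; exact hfp
  rcases lt_trichotomy (cross2 (a:ℂ) (b:ℂ) (c:ℂ)) 0 with hc0 | hc0 | hc0 <;>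
    rcases lt_trichotomy (cross2 (a:ℂ) (b:ℂ) (e:ℂ)) 0 with he0 | he0 | he0
  -- both negative: impossible
  · exact absurd (same_sign_absurd ht0 ht1 heq hc0 he0) not_false
  -- c negative, e zero: t = 1, p = e on the circle: impossible
  · exfalso
    have ht : t = 1 := by rw [he0] at heq; nlinarith
    rw [ht] at hpt
    have : p = (e:ℂ) := by rw [hpt]; push_cast; ring
    rw [this, e.2] at hpnorm; norm_num at hpnorm
  -- c negative, e positive: the core case
  · exact cross_core Λ u v a b c e hu hv hm hmL hab' hc0 he0 hpm
  -- c zero, e negative: t = 0, p = c: impossible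
  · exfalso
    have ht : t = 0 := by
      rw [hc0] at heq
      have := mul_eq_zero.mp (by linarith : t * (cross2 (a:ℂ) (b:ℂ) (e:ℂ) - 0) = 0)
      rcases this with h | h
      · exact h
      · exfalso; rw [sub_zero] at h; linarith
    rw [ht] at hpt
    have : p = (c:ℂ) := by rw [hpt]; push_cast; ring
    rw [this, c.2] at hpnorm; norm_num at hpnorm
  -- both zero: both endpoints of m are in {a, b}, hence m = s(a,b)
  · have hcend := endpoint_of_cross2_zero a.2 b.2 c.2 hab' hc0
    have heend := endpoint_of_cross2_zero a.2 b.2 e.2 hab' he0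
    rcases hcend with h1 | h1 <;> rcases heend with h2 | h2
    · exact absurd (h1.trans h2.symm) hce
    · have : s(a, b) = s(c, e) := by rw [Subtype.ext h1.symm, Subtype.ext h2.symm]
      rw [this]; exact hmL
    · have : s(a, b) = s(c, e) := by
        rw [Subtype.ext h1.symm, Subtype.ext h2.symm, Sym2.eq_swap]
      rw [this]; exact hmL
    · exact absurd (h1.trans h2.symm) hce
  -- c zero, e positive: t = 0, p = c: impossible
  · exfalso
    have ht : t = 0 := by
      rw [hc0] at heq
      have := mul_eq_zero.mp (by linarith : t * (cross2 (a:ℂ) (b:ℂ) (e:ℂ) - 0) = 0)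
      rcases this with h | h
      · exact h
      · exfalso; rw [sub_zero] at h; linarith
    rw [ht] at hpt
    have : p = (c:ℂ) := by rw [hpt]; push_cast; ring
    rw [this, c.2] at hpnorm; norm_num at hpnorm
  -- c positive, e negative: core with roles swapped
  · have hswap : s(e, c) ∈ Λ.leaves := by rwa [Sym2.eq_swap]
    have hpm' : p ∈ segment ℝ (e:ℂ) (c:ℂ) := by rwa [segment_symm]
    have := cross_core Λ u v a b e c hu hv hm hswap hab' he0 hc0 hpm'
    exact this
  -- c positive, e zero: t = 1, p = e: impossible
  · exfalso
    have ht : t = 1 := by rw [he0] at heq; nlinarith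
    rw [ht] at hpt
    have : p = (e:ℂ) := by rw [hpt]; push_cast; ring
    rw [this, e.2] at hpnorm; norm_num at hpnorm
  -- both positive: impossible
  · exact absurd (same_sign_absurd ht0 ht1 (by linarith : -cross2 (a:ℂ) (b:ℂ) (c:ℂ) + t * (-cross2 (a:ℂ) (b:ℂ) (e:ℂ) - -cross2 (a:ℂ) (b:ℂ) (c:ℂ)) = 0) (by linarith) (by linarith)) not_false

lemma arg_pow_of_small {v : ℂ} (d : ℕ) (hv : ‖v‖ = 1) (hd : 1 ≤ d)
    (h : |Complex.arg v| < Real.pi / d) :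
    |Complex.arg (v ^ d)| = d * |Complex.arg v| := by
  have hd' : (0:ℝ) < d := by exact_mod_cast Nat.lt_of_lt_of_le Nat.zero_lt_one hd
  set θ := Complex.arg v with hθ
  have hvexp : v = Complex.exp (θ * Complex.I) := by
    have := Complex.norm_mul_exp_arg_mul_I v
    rw [hv] at this
    simpa using this.symm
  have hpow : v ^ d = Complex.exp (((d * θ : ℝ) : ℂ) * Complex.I) := by
    rw [hvexp, ← Complex.exp_nat_mul]
    push_cast
    ring_nf
  have hbound : |(d:ℝ) * θ| < Real.pi := by
    rw [abs_mul, abs_of_pos hd']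
    calc (d:ℝ) * |θ| < d * (Real.pi / d) := by
          apply mul_lt_mul_of_pos_left h hd'
      _ = Real.pi := by field_simp
  have harg : Complex.arg (v ^ d) = d * θ := by
    rw [hpow, Complex.exp_mul_I]
    exact Complex.arg_cos_add_sin_mul_I
      ⟨(abs_lt.mp hbound).1, (abs_lt.mp hbound).2.le⟩
  rw [harg, abs_mul, abs_of_pos hd']

lemma sigmaS_iter_val (d : ℕ) (a : SPt) (k : ℕ) :
    (((sigmaS d)^[k] a : SPt) : ℂ) = (a:ℂ) ^ (d ^ k) := by
  induction k with
  | zero => simp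
  | succ k ih =>
    rw [Function.iterate_succ_apply', pow_succ, pow_mul]
    show ((((sigmaS d)^[k] a : SPt) : ℂ) ^ d) = ((a:ℂ) ^ d ^ k) ^ d
    rw [ih]

lemma chordMap_iter (d : ℕ) (a b : SPt) (k : ℕ) :
    (chordMap d)^[k] s(a, b) = s((sigmaS d)^[k] a, (sigmaS d)^[k] b) := by
  induction k with
  | zero => simp
  | succ k ih =>
    rw [Function.iterate_succ_apply', ih, chordMap_mk, Function.iterate_succ_apply',
      Function.iterate_succ_apply']

/-- Every forward-invariant family with a nondegenerate leaf has a long leaf. -/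
lemma exists_long_leaf (d : ℕ) (hd : 2 ≤ d) (L : Set Chord)
    (hfwd : ∀ ℓ ∈ L, chordMap d ℓ ∈ L) (a b : SPt) (hab : a ≠ b) (hL : s(a, b) ∈ L) :
    ∃ x y : SPt, s(x, y) ∈ L ∧ 2 - 2 * Real.cos (Real.pi / d) ≤ ‖(x:ℂ) - (y:ℂ)‖^2 := by
  have hd1 : 1 ≤ d := le_trans (by norm_num) hd
  have hdR : (1:ℝ) < (d:ℝ) := by exact_mod_cast lt_of_lt_of_le (by norm_num) hd
  have hdR0 : (0:ℝ) < (d:ℝ) := by linarith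
  have hb0 : (b:ℂ) ≠ 0 := by
    intro h; have := b.2; rw [h] at this; simp at this
  set w : ℂ := (a:ℂ) / (b:ℂ) with hw
  have hwnorm : ‖w‖ = 1 := by rw [hw, norm_div, a.2, b.2]; norm_num
  have hw0 : w ≠ 0 := by rw [← norm_pos_iff, hwnorm]; norm_num
  have hw1 : w ≠ 1 := by
    intro h
    rw [hw, div_eq_one_iff_eq hb0] at h
    exact hab (Subtype.ext h)
  set θ0 : ℝ := |Complex.arg w| with hθ0
  have hθ0pos : 0 < θ0 := by
    rw [hθ0, abs_pos]
    intro h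
    rw [Complex.arg_eq_zero_iff] at h
    apply hw1
    have h2 := normSq_one_of w hwnorm
    rw [Complex.normSq_apply, h.2] at h2
    have : w.re = 1 := by nlinarith [h.1]
    apply Complex.ext <;> simp [this, h.2]
  -- minimal k with d^k * θ0 ≥ π/d
  have hex : ∃ k : ℕ, Real.pi / d ≤ (d:ℝ)^k * θ0 := by
    obtain ⟨n, hn⟩ := pow_unbounded_of_one_lt ((Real.pi / d) / θ0) hdR
    refine ⟨n, ?_⟩
    rw [div_lt_iff₀ hθ0pos] at hn
    linarith
  set k := Nat.find hex with hk
  have hkspec : Real.pi / d ≤ (d:ℝ)^k * θ0 := Nat.find_spec hex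
  have hkmin : ∀ j, j < k → (d:ℝ)^j * θ0 < Real.pi / d := by
    intro j hj
    have := Nat.find_min hex hj
    linarith [lt_of_not_ge this]
  have key : ∀ j, j ≤ k → |Complex.arg (w ^ d ^ j)| = (d:ℝ)^j * θ0 := by
    intro j
    induction j with
    | zero => intro _; simp [hθ0]
    | succ j ih =>
      intro hjk
      have hj : j < k := Nat.lt_of_succ_le hjk
      have hsmall : |Complex.arg (w ^ d ^ j)| < Real.pi / d := by
        rw [ih hj.le]; exact hkmin j hj
      have hnorm : ‖w ^ d ^ j‖ = 1 := by rw [norm_pow, hwnorm, one_pow]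
      have := arg_pow_of_small d hnorm hd1 hsmall
      rw [← pow_mul, ← pow_succ] at this
      rw [this, ih hj.le]
      push_cast
      ring
  -- the iterated leaf
  have hmem : ∀ n : ℕ, (chordMap d)^[n] s(a, b) ∈ L := by
    intro n
    induction n with
    | zero => exact hL
    | succ n ih => rw [Function.iterate_succ_apply']; exact hfwd _ ih
  set x := (sigmaS d)^[k] a with hx
  set y := (sigmaS d)^[k] b with hy
  have hxyL : s(x, y) ∈ L := by rw [hx, hy, ← chordMap_iter]; exact hmem k
  refine ⟨x, y, hxyL, ?_⟩
  have hyval : ((y:ℂ)) = (b:ℂ) ^ d ^ k := sigmaS_iter_val d b k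
  have hxval : ((x:ℂ)) = (a:ℂ) ^ d ^ k := sigmaS_iter_val d a k
  set v : ℂ := w ^ d ^ k with hv
  have hvnorm : ‖v‖ = 1 := by rw [hv, norm_pow, hwnorm, one_pow]
  have hv0 : v ≠ 0 := by rw [← norm_pos_iff, hvnorm]; norm_num
  have hratio : (x:ℂ) - (y:ℂ) = (y:ℂ) * (v - 1) := by
    rw [hxval, hyval, hv, hw, div_pow]
    field_simp
  have hnormeq : ‖(x:ℂ) - (y:ℂ)‖^2 = 2 - 2 * v.re := by
    have hy1 : ‖(y:ℂ)‖ = 1 := y.2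
    rw [hratio, norm_mul, hy1, one_mul]
    have h1 : ‖v - 1‖^2 = Complex.normSq (v - 1) := by
      rw [Complex.sq_norm]
    have h2 : Complex.normSq v = 1 := normSq_one_of v hvnorm
    rw [h1]
    rw [Complex.normSq_apply] at h2 ⊢
    simp only [Complex.sub_re, Complex.sub_im, Complex.one_re, Complex.one_im]
    nlinarith [h2]
  rw [hnormeq]
  have hre : v.re = Real.cos (Complex.arg v) := by
    have := Complex.cos_arg hv0
    rw [hvnorm, div_one] at this
    exact this.symm
  have hargle : |Complex.arg v| ≤ Real.pi := Complex.abs_arg_le_pi v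
  have harglow : Real.pi / d ≤ |Complex.arg v| := by
    rw [hv]; rw [key k le_rfl]; exact hkspec
  have hcos : Real.cos (Complex.arg v) ≤ Real.cos (Real.pi / d) := by
    rw [← Real.cos_abs]
    exact Real.cos_le_cos_of_nonneg_of_le_pi
      (by positivity) hargle harglow
  rw [hre]
  linarith

lemma eps_pos (d : ℕ) (hd : 2 ≤ d) : 0 < 2 - 2 * Real.cos (Real.pi / d) := by
  have hdR : (2:ℝ) ≤ (d:ℝ) := by exact_mod_cast hd
  have h1 : 0 < Real.pi / d := by positivity
  have h2 : Real.pi / d ≤ Real.pi := by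
    rw [div_le_iff₀ (by linarith : (0:ℝ) < (d:ℝ))]
    nlinarith [Real.pi_pos]
  have : Real.cos (Real.pi / d) < Real.cos 0 :=
    Real.strictAntiOn_cos ⟨le_refl 0, Real.pi_pos.le⟩ ⟨h1.le, h2⟩ h1
  rw [Real.cos_zero] at this
  linarith

lemma roots_finite (d : ℕ) (hd : 1 ≤ d) (w : ℂ) : {z : ℂ | z ^ d = w}.Finite := by
  have hne : (Polynomial.X ^ d - Polynomial.C w : Polynomial ℂ) ≠ 0 :=
    Polynomial.X_pow_sub_C_ne_zero (Nat.lt_of_lt_of_le Nat.zero_lt_one hd) w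
  have : {z : ℂ | z ^ d = w} = {z : ℂ | (Polynomial.X ^ d - Polynomial.C w).IsRoot z} := by
    ext z
    simp [Polynomial.IsRoot, sub_eq_zero]
  rw [this]
  exact Polynomial.finite_setOf_isRoot hne

lemma fiber_finite (d : ℕ) (hd : 1 ≤ d) (c : Chord) :
    {p : Chord | chordMap d p = c}.Finite := by
  induction c using Sym2.ind with
  | _ u v =>
  set A : Set SPt := {x : SPt | (x:ℂ) ^ d = (u:ℂ) ∨ (x:ℂ) ^ d = (v:ℂ)} with hA
  have hAfin : A.Finite := by
    have : A = Subtype.val ⁻¹' ({z : ℂ | z ^ d = (u:ℂ)} ∪ {z : ℂ | z ^ d = (v:ℂ)}) := by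
      ext x; simp [hA, Set.mem_setOf_eq]
    rw [this]
    exact Set.Finite.preimage (Set.injOn_of_injective Subtype.coe_injective)
      ((roots_finite d hd _).union (roots_finite d hd _))
  apply Set.Finite.subset ((hAfin.prod hAfin).image (fun q => s(q.1, q.2)))
  rintro p hp
  induction p using Sym2.ind with
  | _ x y =>
  rw [Set.mem_setOf_eq, chordMap_mk, Sym2.eq_iff] at hp
  refine ⟨(x, y), ?_, rfl⟩
  have hval : ∀ (z : SPt) (t : SPt), sigmaS d z = t → (z:ℂ) ^ d = (t:ℂ) := by
    intro z t h
    have := congrArg Subtype.val h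
    simpa [sigmaS] using this
  rcases hp with ⟨h1, h2⟩ | ⟨h1, h2⟩
  · exact ⟨Or.inl (hval _ _ h1), Or.inr (hval _ _ h2)⟩
  · exact ⟨Or.inr (hval _ _ h1), Or.inl (hval _ _ h2)⟩

lemma tuple_fiber_finite (d : ℕ) (hd : 1 ≤ d) (c : Chord) :
    {s : Fin d → Chord | ∀ i, chordMap d (s i) = c}.Finite := by
  have : {s : Fin d → Chord | ∀ i, chordMap d (s i) = c} =
      Set.pi Set.univ (fun _ : Fin d => {p : Chord | chordMap d p = c}) := by
    ext s
    simp [Set.mem_pi]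
  rw [this]
  exact Set.Finite.pi (fun _ => fiber_finite d hd c)

lemma chain_finite_nonempty_inter {α β : Type*} {c : Set (Set α)} (hcne : c.Nonempty)
    (hchain : IsChain (· ⊆ ·) c) (A : Set α → Set β)
    (hmono : ∀ L L', L ⊆ L' → A L ⊆ A L')
    (hfin : ∀ L ∈ c, (A L).Finite) (hnon : ∀ L ∈ c, (A L).Nonempty) :
    (⋂ L ∈ c, A L).Nonempty := by
  set S : Set ℕ := {n : ℕ | ∃ L ∈ c, (A L).ncard = n} with hS
  have hSne : S.Nonempty := by
    obtain ⟨L0, hL0⟩ := hcne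
    exact ⟨(A L0).ncard, L0, hL0, rfl⟩
  obtain ⟨L0, hL0c, hL0card⟩ := Nat.sInf_mem hSne
  have hmin : ∀ L ∈ c, A L0 ⊆ A L := by
    intro L hLc
    by_cases hLL : L = L0
    · rw [hLL]
    rcases hchain hLc hL0c hLL with h | h
    · have hsub : A L ⊆ A L0 := hmono _ _ h
      have hcard : (A L0).ncard ≤ (A L).ncard := by
        rw [hL0card]
        exact Nat.sInf_le ⟨L, hLc, rfl⟩
      rw [Set.eq_of_subset_of_ncard_le hsub hcard (hfin _ hL0c)]
    · exact hmono _ _ h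
  obtain ⟨x, hx⟩ := hnon L0 hL0c
  exact ⟨x, Set.mem_iInter₂.mpr fun L hL => hmin L hL hx⟩

/-- A set of chords is sequentially closed (under endpoint convergence). -/
def SeqCl (L : Set Chord) : Prop :=
  ∀ (u v : ℕ → SPt) (a b : SPt),
    Tendsto (fun n => ((u n : ℂ))) atTop (nhds (a:ℂ)) →
    Tendsto (fun n => ((v n : ℂ))) atTop (nhds (b:ℂ)) →
    (∀ n, s(u n, v n) ∈ L) → s(a, b) ∈ L

lemma chord_exists_rep (ℓ : Chord) : ∃ a b : SPt, ℓ = s(a, b) :=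
  Sym2.ind (fun a b => ⟨a, b, rfl⟩) ℓ

lemma sub_tendsto_val {u : ℕ → SPt} {a : SPt} (h : Tendsto u atTop (nhds a)) :
    Tendsto (fun n => ((u n : ℂ))) atTop (nhds (a:ℂ)) :=
  (continuous_subtype_val.tendsto a).comp h

lemma plus_compact_of_seqCl (L : Set Chord) (hcl : SeqCl L) :
    IsCompact (⋃ ℓ ∈ L, chordSet ℓ) := by
  have hsub : (⋃ ℓ ∈ L, chordSet ℓ) ⊆ Metric.closedBall (0:ℂ) 1 := by
    intro x hx
    rw [Set.mem_iUnion₂] at hx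
    obtain ⟨ℓ, _, hxl⟩ := hx
    exact chordSet_subset_ball ℓ hxl
  have hclosed : IsClosed (⋃ ℓ ∈ L, chordSet ℓ) := by
    apply IsSeqClosed.isClosed
    intro x p hx hxp
    have hrep : ∀ n, ∃ (a b : SPt) (t : ℝ), 0 ≤ t ∧ t ≤ 1 ∧ s(a, b) ∈ L ∧
        x n = (a:ℂ) + (t:ℂ) * ((b:ℂ) - (a:ℂ)) := by
      intro n
      have := hx n
      rw [Set.mem_iUnion₂] at this
      obtain ⟨ℓ, hℓL, hxl⟩ := this
      obtain ⟨a, b, rfl⟩ := chord_exists_rep ℓ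
      rw [chordSet_mk] at hxl
      obtain ⟨t, ht0, ht1, hteq⟩ := (mem_segment_param _ _ _).mp hxl
      exact ⟨a, b, t, ht0, ht1, hℓL, hteq⟩
    choose u v t ht0 ht1 hmem heq using hrep
    -- extract convergent subsequences
    obtain ⟨q, _, φ, hφ, hqt⟩ := isCompact_univ.tendsto_subseq
      (x := fun n => (u n, v n)) (fun n => Set.mem_univ _)
    obtain ⟨tl, htl, ψ, hψ, htt⟩ := (isCompact_Icc (a := (0:ℝ)) (b := 1)).tendsto_subseq
      (x := fun n => t (φ n)) (fun n => ⟨ht0 _, ht1 _⟩)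
    set a := q.1
    set b := q.2
    have hu : Tendsto (fun n => ((u (φ (ψ n)) : ℂ))) atTop (nhds (a:ℂ)) :=
      sub_tendsto_val (((continuous_fst.tendsto q).comp hqt).comp hψ.tendsto_atTop)
    have hv : Tendsto (fun n => ((v (φ (ψ n)) : ℂ))) atTop (nhds (b:ℂ)) :=
      sub_tendsto_val (((continuous_snd.tendsto q).comp hqt).comp hψ.tendsto_atTop)
    have htt' : Tendsto (fun n => t (φ (ψ n))) atTop (nhds tl) := htt
    have hLab : s(a, b) ∈ L := hcl _ _ _ _ hu hv (fun n => hmem _)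
    have hxlim : Tendsto (fun n => x (φ (ψ n))) atTop
        (nhds ((a:ℂ) + (tl:ℂ) * ((b:ℂ) - (a:ℂ)))) := by
      have : ∀ n, x (φ (ψ n)) = ((u (φ (ψ n)) : ℂ))
          + ((t (φ (ψ n)) : ℝ) : ℂ) * (((v (φ (ψ n)) : ℂ)) - ((u (φ (ψ n)) : ℂ))) :=
        fun n => heq _
      simp only [this]
      exact hu.add ((((Complex.continuous_ofReal.tendsto tl).comp htt')).mul (hv.sub hu))
    have hxlim' : Tendsto (fun n => x (φ (ψ n))) atTop (nhds p) :=
      hxp.comp ((hφ.comp hψ).tendsto_atTop)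
    have hpeq : p = (a:ℂ) + (tl:ℂ) * ((b:ℂ) - (a:ℂ)) :=
      tendsto_nhds_unique hxlim' hxlim
    refine Set.mem_biUnion hLab ?_
    rw [chordSet_mk]
    exact (mem_segment_param _ _ _).mpr ⟨tl, htl.1, htl.2, hpeq⟩
  exact (isCompact_closedBall (0:ℂ) 1).of_isClosed_subset hclosed hsub

/-- sibling invariance for a plain set of chords -/
def InvSet (d : ℕ) (L : Set Chord) : Prop :=
  (∀ ℓ ∈ L, chordMap d ℓ ∈ L) ∧
  (∀ ℓ ∈ L, ∃ p ∈ L, chordMap d p = ℓ) ∧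
  (∀ ℓ ∈ L, ¬ (chordMap d ℓ).IsDiag →
    ∃ s : Fin d → Chord, (∃ i, s i = ℓ) ∧ (∀ i, s i ∈ L) ∧
      Function.Injective s ∧
      (∀ i j, i ≠ j → chordSet (s i) ∩ chordSet (s j) = ∅) ∧
      (∀ i, chordMap d (s i) = chordMap d ℓ))

lemma invSet_inter (d : ℕ) (hd : 2 ≤ d) (c : Set (Set Chord)) (hcne : c.Nonempty)
    (hchain : IsChain (· ⊆ ·) c) (hinv : ∀ L ∈ c, InvSet d L) :
    InvSet d (⋂₀ c) := by
  have hd1 : 1 ≤ d := le_trans (by norm_num) hd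
  refine ⟨?_, ?_, ?_⟩
  · intro ℓ hℓ
    rw [Set.mem_sInter] at hℓ ⊢
    exact fun L hL => (hinv L hL).1 ℓ (hℓ L hL)
  · intro ℓ hℓ
    rw [Set.mem_sInter] at hℓ
    have := chain_finite_nonempty_inter hcne hchain
      (fun L => {p : Chord | p ∈ L ∧ chordMap d p = ℓ})
      (fun L L' h => fun p hp => ⟨h hp.1, hp.2⟩)
      (fun L _ => (fiber_finite d hd1 ℓ).subset (fun p hp => hp.2))
      (fun L hL => by
        obtain ⟨p, hpL, hpm⟩ := (hinv L hL).2.1 ℓ (hℓ L hL)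
        exact ⟨p, hpL, hpm⟩)
    obtain ⟨p, hp⟩ := this
    rw [Set.mem_iInter₂] at hp
    obtain ⟨L0, hL0⟩ := hcne
    refine ⟨p, ?_, (hp L0 hL0).2⟩
    rw [Set.mem_sInter]
    exact fun L hL => (hp L hL).1
  · intro ℓ hℓ hnd
    rw [Set.mem_sInter] at hℓ
    have := chain_finite_nonempty_inter hcne hchain
      (fun L => {s : Fin d → Chord | (∃ i, s i = ℓ) ∧ (∀ i, s i ∈ L) ∧
        Function.Injective s ∧
        (∀ i j, i ≠ j → chordSet (s i) ∩ chordSet (s j) = ∅) ∧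
        (∀ i, chordMap d (s i) = chordMap d ℓ)})
      (fun L L' h => fun s hs => ⟨hs.1, fun i => h (hs.2.1 i), hs.2.2⟩)
      (fun L _ => (tuple_fiber_finite d hd1 (chordMap d ℓ)).subset
        (fun s hs => hs.2.2.2.2))
      (fun L hL => (hinv L hL).2.2 ℓ (hℓ L hL) hnd)
    obtain ⟨s, hs⟩ := this
    rw [Set.mem_iInter₂] at hs
    obtain ⟨L0, hL0⟩ := hcne
    obtain ⟨h1, _, h3, h4, h5⟩ := hs L0 hL0
    refine ⟨s, h1, ?_, h3, h4, h5⟩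
    intro i
    rw [Set.mem_sInter]
    exact fun L hL => (hs L hL).2.1 i

lemma inter_nondeg (d : ℕ) (hd : 2 ≤ d) (c : Set (Set Chord)) (hcne : c.Nonempty)
    (hchain : IsChain (· ⊆ ·) c)
    (hmem : ∀ L ∈ c, SeqCl L ∧ (∀ ℓ ∈ L, chordMap d ℓ ∈ L) ∧ ∃ ℓ ∈ L, ¬ℓ.IsDiag) :
    ∃ ℓ ∈ ⋂₀ c, ¬ℓ.IsDiag := by
  classical
  set ε0 : ℝ := 2 - 2 * Real.cos (Real.pi / d) with hε0
  have hε0pos : 0 < ε0 := eps_pos d hd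
  set E : Set Chord → Set (SPt × SPt) :=
    fun L => {q : SPt × SPt | s(q.1, q.2) ∈ L ∧ ε0 ≤ ‖(q.1:ℂ) - (q.2:ℂ)‖^2} with hE
  have hEmono : ∀ L L', L ⊆ L' → E L ⊆ E L' := fun L L' h q hq => ⟨h hq.1, hq.2⟩
  have hEclosed : ∀ L ∈ c, IsClosed (E L) := by
    intro L hL
    apply IsSeqClosed.isClosed
    intro q p hqn hqp
    have hu : Tendsto (fun n => (((q n).1 : ℂ))) atTop (nhds ((p.1:ℂ))) :=
      sub_tendsto_val ((continuous_fst.tendsto p).comp hqp)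
    have hv : Tendsto (fun n => (((q n).2 : ℂ))) atTop (nhds ((p.2:ℂ))) :=
      sub_tendsto_val ((continuous_snd.tendsto p).comp hqp)
    constructor
    · exact (hmem L hL).1 _ _ _ _ hu hv (fun n => (hqn n).1)
    · have hnorm : Tendsto (fun n => ‖(((q n).1 : ℂ)) - (((q n).2 : ℂ))‖^2) atTop
          (nhds (‖(p.1:ℂ) - (p.2:ℂ)‖^2)) :=
        ((continuous_norm.tendsto _).comp (hu.sub hv)).pow 2
      exact ge_of_tendsto hnorm (Filter.Eventually.of_forall fun n => (hqn n).2)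
  have hEnon : ∀ L ∈ c, (E L).Nonempty := by
    intro L hL
    obtain ⟨ℓ, hℓL, hℓnd⟩ := (hmem L hL).2.2
    obtain ⟨a, b, rfl⟩ := chord_exists_rep ℓ
    have hab : a ≠ b := fun h => hℓnd (Sym2.mk_isDiag_iff.mpr h)
    obtain ⟨x, y, hxyL, hxy⟩ := exists_long_leaf d hd L (hmem L hL).2.1 a b hab hℓL
    exact ⟨(x, y), hxyL, hxy⟩
  have : Nonempty ↥c := hcne.to_subtype
  have hdir : Directed (· ⊇ ·) (fun L : ↥c => E L.1) := by
    intro i j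
    by_cases hij : (i:Set Chord) = j
    · refine ⟨i, subset_refl _, ?_⟩
      show E (i:Set Chord) ⊆ E (j:Set Chord)
      rw [hij]
    rcases hchain i.2 j.2 hij with h | h
    · exact ⟨i, subset_refl _, hEmono _ _ h⟩
    · exact ⟨j, hEmono _ _ h, subset_refl _⟩
  obtain ⟨q, hq⟩ := IsCompact.nonempty_iInter_of_directed_nonempty_isCompact_isClosed
    (fun L : ↥c => E L.1) hdir (fun L => hEnon L.1 L.2)
    (fun L => (hEclosed L.1 L.2).isCompact) (fun L => hEclosed L.1 L.2)
  rw [Set.mem_iInter] at hq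
  refine ⟨s(q.1, q.2), ?_, ?_⟩
  · rw [Set.mem_sInter]
    exact fun L hL => (hq ⟨L, hL⟩).1
  · rw [Sym2.mk_isDiag_iff]
    intro h
    obtain ⟨L0, hL0⟩ := hcne
    have := (hq ⟨L0, hL0⟩).2
    rw [h] at this
    simp at this
    linarith

/-- every nonempty sibling `σ_d`-invariant lamination contains a
chief, i.e. a minimal-by-inclusion nonempty sibling `σ_d`-invariant
sublamination. -/
theorem stmt2 (d : ℕ) (hd : 2 ≤ d) (Λ : Lamination) (hinv : Λ.Invariant d)
    (hne : Λ.NonemptyLam) :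
    ∃ Λc : Lamination, IsChiefOf d Λc Λ := by
  classical
  set P : Set (Set Chord) := {L | L ⊆ Λ.leaves ∧ (∀ z : SPt, Sym2.diag z ∈ L) ∧
    SeqCl L ∧ InvSet d L ∧ ∃ ℓ ∈ L, ¬ ℓ.IsDiag} with hP
  have hΛP : Λ.leaves ∈ P := by
    refine ⟨subset_refl _, Λ.diag_mem, ?_, ?_, hne⟩
    · intro u v a b hu hv hm
      exact lam_leaves_seqClosed Λ u v a b hu hv hm
    · exact ⟨hinv.1, hinv.2.1, hinv.2.2⟩
  have hzorn : ∀ c ⊆ P, IsChain (· ⊆ ·) c → c.Nonempty → ∃ lb ∈ P, ∀ s ∈ c, lb ⊆ s := by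
    intro c hcP hchain hcne
    refine ⟨⋂₀ c, ⟨?_, ?_, ?_, ?_, ?_⟩, fun s hs => Set.sInter_subset_of_mem hs⟩
    · obtain ⟨L0, hL0⟩ := hcne
      exact (Set.sInter_subset_of_mem hL0).trans (hcP hL0).1
    · intro z
      rw [Set.mem_sInter]
      exact fun L hL => (hcP hL).2.1 z
    · intro u v a b hu hv hm
      rw [Set.mem_sInter]
      intro L hL
      exact (hcP hL).2.2.1 u v a b hu hv
        (fun n => (Set.mem_sInter.mp (hm n)) L hL)
    · exact invSet_inter d hd c hcne hchain (fun L hL => (hcP hL).2.2.2.1)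
    · exact inter_nondeg d hd c hcne hchain
        (fun L hL => ⟨(hcP hL).2.2.1, (hcP hL).2.2.2.1.1, (hcP hL).2.2.2.2⟩)
  obtain ⟨m, hmΛ, hmP, hmmin⟩ := zorn_superset_nonempty P hzorn Λ.leaves hΛP
  obtain ⟨hsub, hdiag, hcl, hInv, hnd⟩ := hmP
  set Λc : Lamination :=
    { leaves := m
      no_cross := fun ℓ₁ h₁ ℓ₂ h₂ => Λ.no_cross ℓ₁ (hsub h₁) ℓ₂ (hsub h₂)
      diag_mem := hdiag
      plus_compact := plus_compact_of_seqCl m hcl } with hΛc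
  refine ⟨Λc, hsub, ⟨hInv.1, hInv.2.1, hInv.2.2⟩, hnd, ?_⟩
  intro Λ' hΛ'sub hΛ'inv hΛ'ne
  have hΛ'P : Λ'.leaves ∈ P := by
    refine ⟨hΛ'sub.trans hsub, Λ'.diag_mem, ?_, ⟨hΛ'inv.1, hΛ'inv.2.1, hΛ'inv.2.2⟩, hΛ'ne⟩
    intro u v a b hu hv hm
    exact lam_leaves_seqClosed Λ' u v a b hu hv hm
  exact le_antisymm hΛ'sub (hmmin hΛ'P hΛ'sub)
end
end

section
/- Let Λ be a chief of a nonempty sibling σ_3-invariant lamination and let ℓ ∈ Λ be a nondegenerate leaf. Then the family of iterated pullbacks of the nondegenerate iterated images of ℓ, namely G(ℓ) = {q ∈ Λ : σ_3^k(q) = σ_3^m(ℓ) for some integers k, m ≥ 0 with σ_3^m(ℓ) nondegenerate}, is dense in Λ: every nondegenerate leaf of Λ lies in the closure of G(ℓ) in the space of chords. -/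
noncomputable section

open Filter Metric

namespace Stmt5Aux

open Metric Filter Complex

lemma chord_rep (c : Chord) : ∃ a b : SPt, c = s(a,b) := by
  induction c using Sym2.ind with
  | _ x y => exact ⟨x, y, rfl⟩

lemma chordSet_mk (a b : SPt) : chordSet s(a,b) = segment ℝ (a:ℂ) (b:ℂ) := rfl

lemma chordMap_mk (a b : SPt) : chordMap 3 s(a,b) = s(sigmaS 3 a, sigmaS 3 b) := rfl

lemma sigma_coe (z : SPt) : ((sigmaS 3 z : SPt) : ℂ) = (z:ℂ)^3 := rfl

lemma isDiag_mk (a b : SPt) : (s(a,b)).IsDiag ↔ a = b := Sym2.mk_isDiag_iff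

lemma isDiag_diag (c : Chord) (h : c.IsDiag) : ∃ z : SPt, c = s(z,z) := by
  obtain ⟨a, b, rfl⟩ := chord_rep c
  exact ⟨a, by rw [(isDiag_mk a b).1 h]⟩

lemma chordMap_isDiag {c : Chord} (h : c.IsDiag) : (chordMap 3 c).IsDiag := by
  obtain ⟨z, rfl⟩ := isDiag_diag c h
  rw [chordMap_mk, isDiag_mk]

lemma mem_chordSet_iff (a b : SPt) (x : ℂ) :
    x ∈ chordSet s(a,b) ↔ ∃ t₁ t₂ : ℝ, 0 ≤ t₁ ∧ 0 ≤ t₂ ∧ t₁ + t₂ = 1 ∧ t₁ • (a:ℂ) + t₂ • (b:ℂ) = x := by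
  rw [chordSet_mk]
  constructor
  · rintro ⟨t₁, t₂, h1, h2, h3, h4⟩; exact ⟨t₁, t₂, h1, h2, h3, h4⟩
  · rintro ⟨t₁, t₂, h1, h2, h3, h4⟩; exact ⟨t₁, t₂, h1, h2, h3, h4⟩

lemma norm_le_one_of_mem {c : Chord} {x : ℂ} (hx : x ∈ chordSet c) : ‖x‖ ≤ 1 := by
  obtain ⟨a, b, rfl⟩ := chord_rep c
  rw [mem_chordSet_iff] at hx
  obtain ⟨t₁, t₂, h1, h2, h3, rfl⟩ := hx
  calc ‖t₁ • (a:ℂ) + t₂ • (b:ℂ)‖ ≤ ‖t₁ • (a:ℂ)‖ + ‖t₂ • (b:ℂ)‖ := norm_add_le _ _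
    _ = t₁ * ‖(a:ℂ)‖ + t₂ * ‖(b:ℂ)‖ := by
        rw [norm_smul, norm_smul, Real.norm_eq_abs, Real.norm_eq_abs, _root_.abs_of_nonneg h1, _root_.abs_of_nonneg h2]
    _ = 1 := by rw [a.2, b.2]; ring_nf; linarith

lemma chordSet_nonempty (c : Chord) : (chordSet c).Nonempty := by
  obtain ⟨a, b, rfl⟩ := chord_rep c
  exact ⟨a, by rw [chordSet_mk]; exact left_mem_segment _ _ _⟩

lemma left_mem_chordSet (a b : SPt) : (a:ℂ) ∈ chordSet s(a,b) := by
  rw [chordSet_mk]; exact left_mem_segment _ _ _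

lemma right_mem_chordSet (a b : SPt) : (b:ℂ) ∈ chordSet s(a,b) := by
  rw [chordSet_mk]; exact right_mem_segment _ _ _

lemma chordSet_isCompact (c : Chord) : IsCompact (chordSet c) := by
  obtain ⟨a, b, rfl⟩ := chord_rep c
  rw [chordSet_mk, segment_eq_image']
  exact (isCompact_Icc.image_of_continuousOn ((continuous_const.add
    (continuous_id.smul continuous_const)).continuousOn))

lemma chordSet_isClosed (c : Chord) : IsClosed (chordSet c) := (chordSet_isCompact c).isClosed

lemma chord_edist_ne_top (c c' : Chord) :
    EMetric.hausdorffEdist (chordSet c) (chordSet c') ≠ ⊤ :=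
  hausdorffEdist_ne_top_of_nonempty_of_bounded (chordSet_nonempty c) (chordSet_nonempty c')
    (chordSet_isCompact c).isBounded (chordSet_isCompact c').isBounded

lemma chordDist_nonneg (c c' : Chord) : 0 ≤ chordDist c c' := hausdorffDist_nonneg

lemma chordDist_comm (c c' : Chord) : chordDist c c' = chordDist c' c := hausdorffDist_comm

lemma chordDist_self (c : Chord) : chordDist c c = 0 := hausdorffDist_self_zero

lemma chordDist_triangle (c₁ c₂ c₃ : Chord) :
    chordDist c₁ c₃ ≤ chordDist c₁ c₂ + chordDist c₂ c₃ :=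
  hausdorffDist_triangle (chord_edist_ne_top c₁ c₂)

/-- key unit-circle fact -/
lemma re_mul_conj_lt {a b : ℂ} (ha : ‖a‖ = 1) (hb : ‖b‖ = 1) (hab : a ≠ b) :
    (a * (starRingEnd ℂ) b).re < 1 := by
  set w := a * (starRingEnd ℂ) b with hw
  have habs : ‖w‖ = 1 := by
    rw [hw, norm_mul, Complex.norm_conj, ha, hb, mul_one]
  rcases lt_or_eq_of_le (Complex.re_le_norm w) with h | h
  · rwa [habs] at h
  · exfalso
    have hre1 : w.re = 1 := by rw [h, habs]
    have him : w.im = 0 := by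
      have h2 := Complex.sq_norm w
      rw [habs, Complex.normSq_apply, hre1] at h2
      nlinarith
    have hw1 : w = 1 := by
      apply Complex.ext <;> simp [hre1, him]
    have hb2 : (starRingEnd ℂ) b * b = 1 := by
      rw [mul_comm, Complex.mul_conj]
      rw [← Complex.sq_norm, hb]
      norm_num
    apply hab
    calc a = a * ((starRingEnd ℂ) b * b) := by rw [hb2, mul_one]
    _ = w * b := by rw [hw]; ring
    _ = b := by rw [hw1, one_mul]

lemma norm_combo_lt {a b : ℂ} (ha : ‖a‖ = 1) (hb : ‖b‖ = 1) (hab : a ≠ b)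
    {t₁ t₂ : ℝ} (h1 : 0 < t₁) (h2 : 0 < t₂) (h3 : t₁ + t₂ = 1) :
    ‖t₁ • a + t₂ • b‖ < 1 := by
  have hr := re_mul_conj_lt ha hb hab
  have hna : Complex.normSq a = 1 := by
    rw [← Complex.sq_norm, ha]; norm_num
  have hnb : Complex.normSq b = 1 := by
    rw [← Complex.sq_norm, hb]; norm_num
  have hsq : Complex.normSq (t₁ • a + t₂ • b) < 1 := by
    rw [Complex.real_smul, Complex.real_smul, Complex.normSq_add]
    have e1 : Complex.normSq ((t₁:ℂ) * a) = t₁^2 := by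
      rw [Complex.normSq_mul, Complex.normSq_ofReal, hna]; ring
    have e2 : Complex.normSq ((t₂:ℂ) * b) = t₂^2 := by
      rw [Complex.normSq_mul, Complex.normSq_ofReal, hnb]; ring
    have e3 : ((t₁:ℂ) * a * (starRingEnd ℂ) ((t₂:ℂ) * b)).re
        = t₁ * t₂ * (a * (starRingEnd ℂ) b).re := by
      rw [map_mul, Complex.conj_ofReal]
      have : (t₁:ℂ) * a * ((t₂:ℂ) * (starRingEnd ℂ) b) = ((t₁ * t₂ : ℝ) : ℂ) * (a * (starRingEnd ℂ) b) := by
        push_cast; ring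
      rw [this]; simp [Complex.mul_re]
    rw [e1, e2, e3]
    nlinarith [mul_pos h1 h2, mul_lt_mul_of_pos_left hr (mul_pos h1 h2)]
  have hnn : 0 ≤ ‖t₁ • a + t₂ • b‖ := norm_nonneg _
  have : ‖t₁ • a + t₂ • b‖^2 = Complex.normSq (t₁ • a + t₂ • b) := by
    rw [Complex.sq_norm]
  nlinarith

/-- a point of a chord lying on the circle is an endpoint -/
lemma endpoint_of_norm_one {a b w : SPt} (hw : (w:ℂ) ∈ chordSet s(a,b)) : w = a ∨ w = b := by
  rw [mem_chordSet_iff] at hw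
  obtain ⟨t₁, t₂, h1, h2, h3, h4⟩ := hw
  by_cases hab : (a:ℂ) = (b:ℂ)
  · left
    apply Subtype.ext
    rw [← h4, hab, ← add_smul, h3, one_smul]
  rcases eq_or_lt_of_le h1 with h1' | h1'
  · right; apply Subtype.ext
    have ht2 : t₂ = 1 := by linarith
    rw [← h4, ← h1', ht2]; simp
  rcases eq_or_lt_of_le h2 with h2' | h2'
  · left; apply Subtype.ext
    have ht1 : t₁ = 1 := by linarith
    rw [← h4, ← h2', ht1]; simp
  exfalso
  have := norm_combo_lt a.2 b.2 hab h1' h2' h3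
  rw [h4, w.2] at this
  exact lt_irrefl _ this

lemma chord_eq_of_chordSet_eq {c c' : Chord} (h : chordSet c = chordSet c') : c = c' := by
  obtain ⟨a, b, rfl⟩ := chord_rep c
  obtain ⟨u, v, rfl⟩ := chord_rep c'
  have hu : u = a ∨ u = b := endpoint_of_norm_one (h ▸ left_mem_chordSet u v)
  have hv : v = a ∨ v = b := endpoint_of_norm_one (h ▸ right_mem_chordSet u v)
  have ha : a = u ∨ a = v := endpoint_of_norm_one (h.symm ▸ left_mem_chordSet a b)
  have hb : b = u ∨ b = v := endpoint_of_norm_one (h.symm ▸ right_mem_chordSet a b)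
  rw [Sym2.eq_iff]
  rcases hu with rfl | rfl
  · rcases hv with rfl | rfl
    · rcases hb with rfl | rfl
      · exact Or.inl ⟨rfl, rfl⟩
      · exact Or.inl ⟨rfl, rfl⟩
    · exact Or.inl ⟨rfl, rfl⟩
  · rcases hv with rfl | rfl
    · exact Or.inr ⟨rfl, rfl⟩
    · rcases ha with rfl | rfl
      · exact Or.inl ⟨rfl, rfl⟩
      · exact Or.inr ⟨rfl, rfl⟩

lemma chord_eq_of_chordDist_zero {c c' : Chord} (h : chordDist c c' = 0) : c = c' :=
  chord_eq_of_chordSet_eq (((chordSet_isClosed c).hausdorffDist_zero_iff_eq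
    (chordSet_isClosed c') (chord_edist_ne_top c c')).1 h)

lemma chordDist_pos_of_ne {c c' : Chord} (h : c ≠ c') : 0 < chordDist c c' := by
  rcases lt_or_eq_of_le (chordDist_nonneg c c') with h' | h'
  · exact h'
  · exact absurd (chord_eq_of_chordDist_zero h'.symm) h

/-- Hausdorff distance between chords bounded by endpoint distances -/
lemma chordDist_mk_le (a b a' b' : SPt) :
    chordDist s(a,b) s(a',b') ≤ max (dist (a:ℂ) (a':ℂ)) (dist (b:ℂ) (b':ℂ)) := by
  have key : ∀ (x y x' y' : SPt), ∀ z ∈ chordSet s(x,y),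
      ∃ z' ∈ chordSet s(x',y'), dist z z' ≤ max (dist (x:ℂ) (x':ℂ)) (dist (y:ℂ) (y':ℂ)) := by
    intro x y x' y' z hz
    rw [mem_chordSet_iff] at hz
    obtain ⟨t₁, t₂, h1, h2, h3, rfl⟩ := hz
    refine ⟨t₁ • (x':ℂ) + t₂ • (y':ℂ), (mem_chordSet_iff _ _ _).2 ⟨t₁, t₂, h1, h2, h3, rfl⟩, ?_⟩
    rw [dist_eq_norm]
    have : t₁ • (x:ℂ) + t₂ • (y:ℂ) - (t₁ • (x':ℂ) + t₂ • (y':ℂ))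
        = t₁ • ((x:ℂ) - (x':ℂ)) + t₂ • ((y:ℂ) - (y':ℂ)) := by
      rw [smul_sub, smul_sub]; ring
    rw [this]
    calc ‖t₁ • ((x:ℂ) - (x':ℂ)) + t₂ • ((y:ℂ) - (y':ℂ))‖
        ≤ ‖t₁ • ((x:ℂ) - (x':ℂ))‖ + ‖t₂ • ((y:ℂ) - (y':ℂ))‖ := norm_add_le _ _
      _ = t₁ * ‖(x:ℂ) - (x':ℂ)‖ + t₂ * ‖(y:ℂ) - (y':ℂ)‖ := by
          rw [norm_smul, norm_smul, Real.norm_eq_abs, Real.norm_eq_abs,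
            _root_.abs_of_nonneg h1, _root_.abs_of_nonneg h2]
      _ ≤ t₁ * max (dist (x:ℂ) (x':ℂ)) (dist (y:ℂ) (y':ℂ))
          + t₂ * max (dist (x:ℂ) (x':ℂ)) (dist (y:ℂ) (y':ℂ)) := by
          apply add_le_add
          · refine mul_le_mul_of_nonneg_left ?_ h1
            rw [← dist_eq_norm]; exact le_max_left _ _
          · refine mul_le_mul_of_nonneg_left ?_ h2
            rw [← dist_eq_norm]; exact le_max_right _ _
      _ = max (dist (x:ℂ) (x':ℂ)) (dist (y:ℂ) (y':ℂ)) := by rw [← add_mul, h3, one_mul]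
  apply hausdorffDist_le_of_mem_dist
  · exact le_max_of_le_left dist_nonneg
  · exact key a b a' b'
  · intro z hz
    obtain ⟨z', hz', hd⟩ := key a' b' a b z hz
    refine ⟨z', hz', ?_⟩
    rw [dist_comm ((a':ℂ)) ((a:ℂ)), dist_comm ((b':ℂ)) ((b:ℂ))] at hd
    exact hd

end Stmt5Aux
namespace Stmt5Aux

open Metric Filter Complex

instance : CompactSpace SPt := by
  have h : IsCompact {z : ℂ | ‖z‖ = 1} := by
    have : {z : ℂ | ‖z‖ = 1} = Metric.sphere (0:ℂ) 1 := by
      ext z; simp [Metric.mem_sphere, dist_zero_right]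
    rw [this]; exact isCompact_sphere _ _
  exact isCompact_iff_compactSpace.mp h

/-- chosen endpoints of a chord -/
noncomputable def ept (c : Chord) : SPt × SPt :=
  ⟨(chord_rep c).choose, (chord_rep c).choose_spec.choose⟩

lemma ept_spec (c : Chord) : c = s((ept c).1, (ept c).2) :=
  (chord_rep c).choose_spec.choose_spec

lemma tendsto_coe_of_tendsto {u : ℕ → SPt} {a : SPt} (h : Tendsto u atTop (nhds a)) :
    Tendsto (fun n => (u n : ℂ)) atTop (nhds (a : ℂ)) :=
  (continuous_subtype_val.tendsto a).comp h

lemma eventually_ne_of_tendsto {x y : ℕ → ℂ} {a b : ℂ}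
    (hx : Tendsto x atTop (nhds a)) (hy : Tendsto y atTop (nhds b)) (hab : a ≠ b) :
    ∀ᶠ n in atTop, x n ≠ y n := by
  have hd : Tendsto (fun n => dist (x n) (y n)) atTop (nhds (dist a b)) := hx.dist hy
  have := hd.eventually (eventually_gt_nhds (dist_pos.2 hab))
  filter_upwards [this] with n hn
  exact dist_pos.1 hn

lemma tendsto_chordDist_mk {e₁ e₂ : ℕ → SPt} {a b : SPt}
    (h1 : Tendsto (fun n => (e₁ n : ℂ)) atTop (nhds (a:ℂ)))
    (h2 : Tendsto (fun n => (e₂ n : ℂ)) atTop (nhds (b:ℂ))) :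
    Tendsto (fun n => chordDist s(e₁ n, e₂ n) s(a, b)) atTop (nhds 0) := by
  apply squeeze_zero (fun n => chordDist_nonneg _ _)
    (fun n => chordDist_mk_le (e₁ n) (e₂ n) a b)
  have d1 : Tendsto (fun n => dist ((e₁ n : ℂ)) (a:ℂ)) atTop (nhds 0) := by
    rwa [← tendsto_iff_dist_tendsto_zero] 
  have d2 : Tendsto (fun n => dist ((e₂ n : ℂ)) (b:ℂ)) atTop (nhds 0) := by
    rwa [← tendsto_iff_dist_tendsto_zero]
  have := d1.max d2
  simpa using this

/-- limit uniqueness for chords -/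
lemma chord_tendsto_unique {f : ℕ → Chord} {c c' : Chord}
    (h : Tendsto (fun n => chordDist (f n) c) atTop (nhds 0))
    (h' : Tendsto (fun n => chordDist (f n) c') atTop (nhds 0)) : c = c' := by
  apply chord_eq_of_chordDist_zero
  have hsum : Tendsto (fun n => chordDist c (f n) + chordDist (f n) c') atTop (nhds 0) := by
    have : Tendsto (fun n => chordDist c (f n)) atTop (nhds 0) := by
      simpa [chordDist_comm] using h
    simpa using this.add h'
  have hle : ∀ n, chordDist c c' ≤ chordDist c (f n) + chordDist (f n) c' :=
    fun n => chordDist_triangle _ _ _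
  have := ge_of_tendsto' hsum hle
  exact le_antisymm this (chordDist_nonneg _ _)

/-- Lemma C: subsequence with converging endpoints -/
lemma chord_approx_subseq {f : ℕ → Chord} {c : Chord}
    (hf : Tendsto (fun n => chordDist (f n) c) atTop (nhds 0)) :
    ∃ (φ : ℕ → ℕ) (a b : SPt), StrictMono φ ∧
      Tendsto (fun n => ((ept (f (φ n))).1 : ℂ)) atTop (nhds (a:ℂ)) ∧
      Tendsto (fun n => ((ept (f (φ n))).2 : ℂ)) atTop (nhds (b:ℂ)) ∧ c = s(a,b) ∧
      Tendsto (fun n => chordDist (f (φ n)) s(a,b)) atTop (nhds 0) := by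
  obtain ⟨p, φ, hφ, hconv⟩ := CompactSpace.tendsto_subseq (fun n => ept (f n))
  have hdist : Tendsto (fun n => chordDist (f (φ n)) s(p.1, p.2)) atTop (nhds 0) := by
    have := tendsto_chordDist_mk (e₁ := fun n => (ept (f (φ n))).1) (e₂ := fun n => (ept (f (φ n))).2)
      (a := p.1) (b := p.2)
      (tendsto_coe_of_tendsto ((continuous_fst.tendsto p).comp hconv))
      (tendsto_coe_of_tendsto ((continuous_snd.tendsto p).comp hconv))
    convert this using 2 with n
    rw [← ept_spec (f (φ n))]
  refine ⟨φ, p.1, p.2, hφ, ?_, ?_, ?_, hdist⟩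
  · exact tendsto_coe_of_tendsto ((continuous_fst.tendsto p).comp hconv)
  · exact tendsto_coe_of_tendsto ((continuous_snd.tendsto p).comp hconv)
  · exact chord_tendsto_unique (hf.comp hφ.tendsto_atTop) hdist

/-- extraction of an approximating sequence from an ∀ε statement -/
lemma approx_seq {P : Set Chord} {q : Chord} (h : ∀ ε > (0:ℝ), ∃ q' ∈ P, chordDist q' q < ε) :
    ∃ f : ℕ → Chord, (∀ n, f n ∈ P) ∧ Tendsto (fun n => chordDist (f n) q) atTop (nhds 0) := by
  have h' : ∀ n : ℕ, ∃ q', q' ∈ P ∧ chordDist q' q < 1/(n+1) := by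
    intro n
    obtain ⟨q', hq', hd⟩ := h (1/(n+1)) (by positivity)
    exact ⟨q', hq', hd⟩
  choose f hf hd using h'
  refine ⟨f, hf, ?_⟩
  apply squeeze_zero (fun n => chordDist_nonneg _ _) (fun n => (hd n).le)
  exact tendsto_one_div_add_atTop_nhds_zero_nat

/-- distance between distinct cube roots -/
lemma normSq_sub_of_cube_eq {x y : ℂ} (hx : ‖x‖ = 1) (hy : ‖y‖ = 1)
    (h3 : x^3 = y^3) (hne : x ≠ y) : Complex.normSq (x - y) = 3 := by
  set η := x * (starRingEnd ℂ) y with hη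
  have hny : Complex.normSq y = 1 := by
    rw [← Complex.sq_norm, hy]; norm_num
  have hnx : Complex.normSq x = 1 := by
    rw [← Complex.sq_norm, hx]; norm_num
  have hηn : Complex.normSq η = 1 := by
    rw [hη, Complex.normSq_mul, Complex.normSq_conj, hnx, hny, mul_one]
  have hη3 : η^3 = 1 := by
    have : η^3 = x^3 * (starRingEnd ℂ) (y^3) := by rw [hη]; rw [map_pow]; ring
    rw [this, h3, Complex.mul_conj]
    norm_cast
    rw [map_pow, hny, one_pow]
  have hη1 : η ≠ 1 := by
    intro h1
    apply hne
    have hyy : (starRingEnd ℂ) y * y = 1 := by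
      rw [mul_comm, Complex.mul_conj]; norm_cast
    calc x = x * ((starRingEnd ℂ) y * y) := by rw [hyy, mul_one]
    _ = η * y := by rw [hη]; ring
    _ = y := by rw [h1, one_mul]
  have hquad : η^2 + η + 1 = 0 := by
    have hfac : (η - 1) * (η^2 + η + 1) = η^3 - 1 := by ring
    have : (η - 1) * (η^2 + η + 1) = 0 := by rw [hfac, hη3, sub_self]
    rcases mul_eq_zero.1 this with h' | h'
    · exact absurd (sub_eq_zero.1 h') hη1
    · exact h'
  have hre : η.re = -(1/2) := by
    have hcc : η * (starRingEnd ℂ) η = 1 := by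
      rw [Complex.mul_conj]; norm_cast
    have h0 : η + 1 + (starRingEnd ℂ) η = 0 := by
      have := congrArg (· * (starRingEnd ℂ) η) hquad
      simp only [add_mul, zero_mul, one_mul] at this
      have e : η^2 * (starRingEnd ℂ) η = η := by
        rw [pow_two, mul_assoc, hcc, mul_one]
      rw [e, hcc] at this
      linear_combination this
    have := congrArg Complex.re h0
    simp only [Complex.add_re, Complex.one_re, Complex.conj_re, Complex.zero_re] at this
    linarith
  rw [Complex.normSq_sub, hnx, hny, ← hη]
  rw [hre]
  ring

end Stmt5Aux
namespace Stmt5Aux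

open Metric Filter Complex

/-- 2x2 determinant of two complex numbers viewed as plane vectors -/
def dt (z w : ℂ) : ℝ := z.re * w.im - z.im * w.re

lemma dt_eq (z w : ℂ) : dt z w = ((starRingEnd ℂ) z * w).im := by
  simp [dt, Complex.mul_im, Complex.conj_re, Complex.conj_im]; ring

lemma dt_self (z : ℂ) : dt z z = 0 := by simp [dt]; ring

lemma dt_skew (z w : ℂ) : dt z w = - dt w z := by simp [dt]; ring

lemma dt_zero_right (z : ℂ) : dt z 0 = 0 := by simp [dt]

lemma dt_smul_right (z w : ℂ) (r : ℝ) : dt z (r • w) = r * dt z w := by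
  simp [dt, Complex.real_smul, Complex.mul_re, Complex.mul_im]; ring

lemma dt_smul_left (z w : ℂ) (r : ℝ) : dt (r • z) w = r * dt z w := by
  simp [dt, Complex.real_smul, Complex.mul_re, Complex.mul_im]; ring

lemma dt_add_right (z w₁ w₂ : ℂ) : dt z (w₁ + w₂) = dt z w₁ + dt z w₂ := by
  simp [dt]; ring

lemma dt_sub_right (z w₁ w₂ : ℂ) : dt z (w₁ - w₂) = dt z w₁ - dt z w₂ := by
  simp [dt]; ring

lemma dt_add_left (z₁ z₂ w : ℂ) : dt (z₁ + z₂) w = dt z₁ w + dt z₂ w := by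
  simp [dt]; ring

lemma dt_sub_left (z₁ z₂ w : ℂ) : dt (z₁ - z₂) w = dt z₁ w - dt z₂ w := by
  simp [dt]; ring

lemma dt_eq_zero_dep {z w : ℂ} (h : dt z w = 0) (hz : z ≠ 0) : ∃ r : ℝ, w = r • z := by
  have him : ((starRingEnd ℂ) z * w).im = 0 := by rw [← dt_eq]; exact h
  set ρ := ((starRingEnd ℂ) z * w).re with hρ
  have hzw : (starRingEnd ℂ) z * w = (ρ : ℂ) := by
    apply Complex.ext
    · simp [hρ]
    · simp [him]
  have hnz : Complex.normSq z ≠ 0 := by simpa [Complex.normSq_eq_zero] using hz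
  refine ⟨ρ / Complex.normSq z, ?_⟩
  have h1 : z * ((starRingEnd ℂ) z * w) = (Complex.normSq z : ℂ) * w := by
    rw [← mul_assoc, Complex.mul_conj]
  rw [hzw] at h1
  rw [Complex.real_smul]
  push_cast
  rw [div_mul_eq_mul_div, eq_div_iff (by exact_mod_cast hnz)]
  linear_combination -h1

lemma cramer_repr {e₁ e₂ : ℂ} (hΔ : dt e₁ e₂ ≠ 0) (r : ℂ) :
    r = (dt r e₂ / dt e₁ e₂) • e₁ + (dt e₁ r / dt e₁ e₂) • e₂ := by
  have he₂ : e₂ ≠ 0 := by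
    intro h; rw [h, dt_zero_right] at hΔ; exact hΔ rfl
  set w := r - (dt r e₂ / dt e₁ e₂) • e₁ - (dt e₁ r / dt e₁ e₂) • e₂ with hw
  have hw2 : dt w e₂ = 0 := by
    rw [hw]
    simp only [dt_sub_left, dt_smul_left, dt_self, mul_zero, sub_zero]
    field_simp
    ring
  have hw1 : dt e₁ w = 0 := by
    rw [hw]
    simp only [dt_sub_right, dt_smul_right, dt_self, mul_zero, sub_zero]
    field_simp
    ring
  have hw0 : w = 0 := by
    have h2 : dt e₂ w = 0 := by rw [dt_skew e₂ w, hw2, neg_zero]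
    obtain ⟨μ, hμ⟩ := dt_eq_zero_dep h2 he₂
    rw [hμ, dt_smul_right] at hw1
    rcases mul_eq_zero.1 hw1 with h | h
    · rw [hμ, h, zero_smul]
    · exact absurd h hΔ
  have h0 : r - (dt r e₂ / dt e₁ e₂) • e₁ - (dt e₁ r / dt e₁ e₂) • e₂ = 0 := hw0
  linear_combination (h0 : _)

lemma cramer_unique {e₁ e₂ : ℂ} (hΔ : dt e₁ e₂ ≠ 0) {t s t' s' : ℝ}
    (h : t • e₁ + s • e₂ = t' • e₁ + s' • e₂) : t = t' ∧ s = s' := by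
  have h1 := congrArg (fun z => dt z e₂) h
  simp only [dt_add_left, dt_smul_left, dt_self, mul_zero, add_zero] at h1
  have ht : t = t' := by
    field_simp at h1
    exact h1
  refine ⟨ht, ?_⟩
  have h2 := congrArg (fun z => dt e₁ z) h
  simp only [dt_add_right, dt_smul_right, dt_self, mul_zero, zero_add] at h2
  field_simp at h2
  exact h2

lemma tendsto_dt {α : Type*} {l : Filter α} {z w : α → ℂ} {p q : ℂ}
    (hz : Tendsto z l (nhds p)) (hw : Tendsto w l (nhds q)) :
    Tendsto (fun n => dt (z n) (w n)) l (nhds (dt p q)) := by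
  have hzr : Tendsto (fun n => (z n).re) l (nhds p.re) := (Complex.continuous_re.tendsto p).comp hz
  have hzi : Tendsto (fun n => (z n).im) l (nhds p.im) := (Complex.continuous_im.tendsto p).comp hz
  have hwr : Tendsto (fun n => (w n).re) l (nhds q.re) := (Complex.continuous_re.tendsto q).comp hw
  have hwi : Tendsto (fun n => (w n).im) l (nhds q.im) := (Complex.continuous_im.tendsto q).comp hw
  exact (hzr.mul hwi).sub (hzi.mul hwr)

lemma unit_on_line {a b : ℂ} (hb : ‖b‖ = 1) (hab : a ≠ b) {r : ℝ}
    (ha : ‖a‖ = 1) (h : ‖a + r • (b - a)‖ = 1) : r = 0 ∨ r = 1 := by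
  set d := b - a with hd
  have hS : Complex.normSq d ≠ 0 :=
    fun h' => (sub_ne_zero.2 (Ne.symm hab)) (Complex.normSq_eq_zero.1 h')
  have hna : Complex.normSq a = 1 := by
    rw [← Complex.sq_norm, ha]; norm_num
  have hnb : Complex.normSq b = 1 := by
    rw [← Complex.sq_norm, hb]; norm_num
  have e1 : 2 * (a * (starRingEnd ℂ) d).re = - Complex.normSq d := by
    have : Complex.normSq (a + d) = 1 := by rw [hd]; simpa using hnb
    rw [Complex.normSq_add, hna] at this
    linarith
  have key : Complex.normSq (a + r • d) = 1 + r * (r - 1) * Complex.normSq d := by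
    rw [Complex.normSq_add, hna]
    have h1 : Complex.normSq (r • d) = r^2 * Complex.normSq d := by
      rw [Complex.real_smul, Complex.normSq_mul, Complex.normSq_ofReal]; ring
    have h2 : (a * (starRingEnd ℂ) (r • d)).re = r * (a * (starRingEnd ℂ) d).re := by
      rw [Complex.real_smul, map_mul, Complex.conj_ofReal, ← mul_assoc, mul_comm a, mul_assoc]
      simp [Complex.mul_re, Complex.ofReal_re, Complex.ofReal_im]
    rw [h1, h2]
    have e2 : r * (2 * (a * (starRingEnd ℂ) d).re) = r * (- Complex.normSq d) := by rw [e1]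
    nlinarith [e2]
  have hn1 : Complex.normSq (a + r • d) = 1 := by
    rw [← Complex.sq_norm, h]; norm_num
  rw [key] at hn1
  have hz : r * (r - 1) * Complex.normSq d = 0 := by linarith
  rcases mul_eq_zero.1 hz with h' | h'
  · rcases mul_eq_zero.1 h' with h'' | h''
    · exact Or.inl h''
    · exact Or.inr (by linarith [sub_eq_zero.1 h''])
  · exact absurd h' hS

end Stmt5Aux
namespace Stmt5Aux

open Metric Filter Complex

lemma diag_mem' (Λ : Lamination) (z : SPt) : s(z,z) ∈ Λ.leaves := Λ.diag_mem z

lemma coe_ne {a b : SPt} (h : a ≠ b) : (a:ℂ) ≠ (b:ℂ) := fun h' => h (Subtype.ext h')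

/-- The leaf set of a lamination is closed under Hausdorff limits of chords. -/
lemma leaves_closed (Λ : Lamination) {f : ℕ → Chord} (hf : ∀ n, f n ∈ Λ.leaves) {c : Chord}
    (hlim : Tendsto (fun n => chordDist (f n) c) atTop (nhds 0)) : c ∈ Λ.leaves := by
  by_cases hdiag : c.IsDiag
  · obtain ⟨z, rfl⟩ := isDiag_diag c hdiag
    exact diag_mem' Λ z
  by_cases hc : c ∈ Λ.leaves
  · exact hc
  exfalso
  obtain ⟨φ, a, b, hφ, ha, hb, hcab, hcd0⟩ := chord_approx_subseq hlim
  subst hcab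
  have hab : a ≠ b := fun h => hdiag ((isDiag_mk a b).2 h)
  have hab' : (a:ℂ) ≠ (b:ℂ) := coe_ne hab
  set x : ℂ := (1/2 : ℝ) • (a:ℂ) + (1/2 : ℝ) • (b:ℂ) with hxdef
  have hx_mem : x ∈ chordSet s(a,b) :=
    (mem_chordSet_iff a b x).2 ⟨1/2, 1/2, by norm_num, by norm_num, by norm_num, rfl⟩
  have hxnorm : ‖x‖ < 1 := norm_combo_lt a.2 b.2 hab' (by norm_num) (by norm_num) (by norm_num)
  -- realize x as a limit of points on the approximating leaves
  have hreal : ∀ n, ∃ y ∈ chordSet (f (φ n)), infDist x (chordSet (f (φ n))) = dist x y :=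
    fun n => (chordSet_isCompact _).exists_infDist_eq_dist (chordSet_nonempty _) x
  choose y hymem hyd using hreal
  have hydist : ∀ n, dist x (y n) ≤ chordDist (f (φ n)) s(a,b) := by
    intro n
    calc dist x (y n) = infDist x (chordSet (f (φ n))) := (hyd n).symm
      _ ≤ hausdorffDist (chordSet s(a,b)) (chordSet (f (φ n))) :=
          infDist_le_hausdorffDist_of_mem hx_mem (chord_edist_ne_top s(a,b) (f (φ n)))
      _ = chordDist (f (φ n)) s(a,b) := chordDist_comm s(a,b) (f (φ n))
  have hyx : Tendsto y atTop (nhds x) := by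
    rw [tendsto_iff_dist_tendsto_zero]
    apply squeeze_zero (fun n => dist_nonneg) (fun n => ?_) hcd0
    rw [dist_comm]; exact hydist n
  set U : Set ℂ := ⋃ ℓ ∈ Λ.leaves, chordSet ℓ with hUdef
  have hUclosed : IsClosed U := Λ.plus_compact.isClosed
  have hxU : x ∈ U := hUclosed.mem_of_tendsto hyx
    (Eventually.of_forall fun n => Set.mem_iUnion₂.2 ⟨f (φ n), hf _, hymem n⟩)
  obtain ⟨p, hp, hxp⟩ : ∃ p ∈ Λ.leaves, x ∈ chordSet p := by
    simpa using Set.mem_iUnion₂.1 hxU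
  obtain ⟨u, v, rfl⟩ := chord_rep p
  have hpc : s(u,v) ≠ s(a,b) := fun h => hc (h ▸ hp)
  rw [mem_chordSet_iff] at hxp
  obtain ⟨s₁, s₂, hs1, hs2, hs3, hs4⟩ := hxp
  have huv' : (u:ℂ) ≠ (v:ℂ) := by
    intro h
    have hxeq : x = (u:ℂ) := by rw [← hs4, h, ← add_smul, hs3, one_smul]
    rw [hxeq, u.2] at hxnorm
    exact lt_irrefl 1 hxnorm
  have hs1pos : 0 < s₁ := by
    rcases lt_or_eq_of_le hs1 with h | h
    · exact h
    · exfalso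
      have h2 : s₂ = 1 := by linarith
      have hxeq : x = (v:ℂ) := by rw [← hs4, ← h, h2]; simp
      rw [hxeq, v.2] at hxnorm
      exact lt_irrefl 1 hxnorm
  have hs2pos : 0 < s₂ := by
    rcases lt_or_eq_of_le hs2 with h | h
    · exact h
    · exfalso
      have h1 : s₁ = 1 := by linarith
      have hxeq : x = (u:ℂ) := by rw [← hs4, ← h, h1]; simp
      rw [hxeq, u.2] at hxnorm
      exact lt_irrefl 1 hxnorm
  have hs2lt : s₂ < 1 := by linarith
  set e₁ : ℂ := (b:ℂ) - (a:ℂ) with he₁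
  set e₂ : ℂ := (v:ℂ) - (u:ℂ) with he₂
  have hxu : x = (u:ℂ) + s₂ • e₂ := by
    rw [← hs4, he₂]
    simp only [Complex.real_smul]
    have hs1' : (s₁ : ℂ) = 1 - (s₂ : ℂ) := by
      have : s₁ = 1 - s₂ := by linarith
      rw [this]; push_cast; ring
    rw [hs1']; ring
  have hxa : x = (a:ℂ) + (1/2 : ℝ) • e₁ := by
    rw [hxdef, he₁]; simp only [Complex.real_smul]; push_cast; ring
  by_cases hΔ : dt e₁ e₂ = 0
  · -- parallel case: both endpoints of p lie on the line through a, b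
    obtain ⟨lam, hlam⟩ := dt_eq_zero_dep hΔ (sub_ne_zero.2 (Ne.symm hab'))
    have hu_eq : (u:ℂ) = (a:ℂ) + ((1/2 : ℝ) - s₂ * lam) • e₁ := by
      have h1 : (u:ℂ) = x - s₂ • e₂ := by
        rw [hxu]; ring
      rw [h1, hlam, hxa]
      simp only [Complex.real_smul, smul_smul]
      push_cast; ring
    have hv_eq : (v:ℂ) = (a:ℂ) + ((1/2 : ℝ) - s₂ * lam + lam) • e₁ := by
      have h1 : (v:ℂ) = (u:ℂ) + e₂ := by rw [he₂]; ring
      rw [h1, hu_eq, hlam]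
      simp only [Complex.real_smul]
      push_cast; ring
    have hu_ab : (u:ℂ) = (a:ℂ) ∨ (u:ℂ) = (b:ℂ) := by
      rcases unit_on_line b.2 hab' a.2 (by rw [← he₁, ← hu_eq]; exact u.2) with h | h
      · left; rw [hu_eq, h]; simp
      · right; rw [hu_eq, h, he₁]; simp
    have hv_ab : (v:ℂ) = (a:ℂ) ∨ (v:ℂ) = (b:ℂ) := by
      rcases unit_on_line b.2 hab' a.2 (by rw [← he₁, ← hv_eq]; exact v.2) with h | h
      · left; rw [hv_eq, h]; simp
      · right; rw [hv_eq, h, he₁]; simp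
    apply hpc
    rw [Sym2.eq_iff]
    rcases hu_ab with h1 | h1 <;> rcases hv_ab with h2 | h2
    · exact absurd (h1.trans h2.symm) huv'
    · exact Or.inl ⟨Subtype.ext h1, Subtype.ext h2⟩
    · exact Or.inr ⟨Subtype.ext h1, Subtype.ext h2⟩
    · exact absurd (h1.trans h2.symm) huv'
  · -- transversal case: nearby leaves cross p
    set A : ℕ → ℂ := fun n => ((ept (f (φ n))).1 : ℂ) with hA
    set B : ℕ → ℂ := fun n => ((ept (f (φ n))).2 : ℂ) with hB
    have hfn : ∀ n, f (φ n) = s((ept (f (φ n))).1, (ept (f (φ n))).2) := fun n => ept_spec _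
    set Dn : ℕ → ℝ := fun n => dt (B n - A n) e₂ with hDn
    have hDlim : Tendsto Dn atTop (nhds (dt e₁ e₂)) := tendsto_dt (hb.sub ha) tendsto_const_nhds
    have hDne : ∀ᶠ n in atTop, Dn n ≠ 0 := hDlim.eventually (isOpen_ne.eventually_mem hΔ)
    set T : ℕ → ℝ := fun n => dt ((u:ℂ) - A n) e₂ / Dn n with hT
    set W : ℕ → ℝ := fun n => dt (B n - A n) ((u:ℂ) - A n) / Dn n with hW
    have hua : (u:ℂ) - (a:ℂ) = (1/2 : ℝ) • e₁ - s₂ • e₂ := by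
      have h1 := hxa.symm.trans hxu
      rw [he₁, he₂] at h1 ⊢
      simp only [Complex.real_smul] at h1 ⊢
      push_cast at h1 ⊢
      linear_combination -h1
    have hTlim : Tendsto T atTop (nhds (1/2)) := by
      have hnum : Tendsto (fun n => dt ((u:ℂ) - A n) e₂) atTop (nhds (dt ((u:ℂ) - (a:ℂ)) e₂)) :=
        tendsto_dt (tendsto_const_nhds.sub ha) tendsto_const_nhds
      have hval : dt ((u:ℂ) - (a:ℂ)) e₂ / dt e₁ e₂ = 1/2 := by
        rw [hua, dt_sub_left, dt_smul_left, dt_smul_left, dt_self, mul_zero, sub_zero,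
          mul_div_assoc, div_self hΔ, mul_one]
      have := hnum.div hDlim hΔ
      rw [hval] at this
      exact this
    have hWlim : Tendsto W atTop (nhds (-s₂)) := by
      have hnum : Tendsto (fun n => dt (B n - A n) ((u:ℂ) - A n)) atTop
          (nhds (dt e₁ ((u:ℂ) - (a:ℂ)))) :=
        tendsto_dt (hb.sub ha) (tendsto_const_nhds.sub ha)
      have hval : dt e₁ ((u:ℂ) - (a:ℂ)) / dt e₁ e₂ = -s₂ := by
        rw [hua, dt_sub_right, dt_smul_right, dt_smul_right, dt_self, mul_zero, zero_sub,
          neg_div, mul_div_assoc, div_self hΔ, mul_one]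
      have := hnum.div hDlim hΔ
      rw [hval] at this
      exact this
    set Z : ℕ → ℂ := fun n => (u:ℂ) - (W n) • e₂ with hZ
    have hZlim : Tendsto Z atTop (nhds x) := by
      have h1 : Tendsto (fun n => (W n) • e₂) atTop (nhds ((-s₂ : ℝ) • e₂)) := by
        simp only [Complex.real_smul]
        exact (Complex.continuous_ofReal.tendsto _ |>.comp hWlim).mul tendsto_const_nhds
      have := tendsto_const_nhds.sub h1 (f := fun n => (u:ℂ))
      have hval : (u:ℂ) - (-s₂ : ℝ) • e₂ = x := by
        rw [hxu]; simp only [Complex.real_smul]; push_cast; ring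
      rw [hval] at this
      exact this
    have hZnorm : ∀ᶠ n in atTop, ‖Z n‖ < 1 := hZlim.norm.eventually (eventually_lt_nhds hxnorm)
    have hT0 : ∀ᶠ n in atTop, 0 < T n := hTlim.eventually (eventually_gt_nhds (by norm_num))
    have hT1 : ∀ᶠ n in atTop, T n < 1 := hTlim.eventually (eventually_lt_nhds (by norm_num))
    have hW0 : ∀ᶠ n in atTop, -1 < W n := hWlim.eventually (eventually_gt_nhds (by linarith))
    have hW1 : ∀ᶠ n in atTop, W n < 0 := hWlim.eventually (eventually_lt_nhds (by linarith))
    have hne5 : ∀ᶠ n in atTop, chordDist (f (φ n)) s(a,b) < chordDist s(u,v) s(a,b) :=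
      hcd0.eventually (eventually_lt_nhds (chordDist_pos_of_ne hpc))
    obtain ⟨n, hall⟩ := (hDne.and (hZnorm.and (hT0.and (hT1.and (hW0.and (hW1.and hne5)))))).exists
    obtain ⟨hDne_n, hZn, hT0n, hT1n, hW0n, hW1n, hne5n⟩ := hall
    -- the Cramer identity at stage n
    have hcram := cramer_repr (e₁ := B n - A n) (e₂ := e₂) hDne_n ((u:ℂ) - A n)
    have hz_f : Z n = A n + (T n) • (B n - A n) := by
      have hc' := hcram
      simp only [hZ, hT, hW, Complex.real_smul] at hc' ⊢
      linear_combination hc'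
    -- membership of Z n in both chords
    have hmem_p : Z n ∈ chordSet s(u,v) := by
      rw [mem_chordSet_iff]
      refine ⟨1 - (-W n), -W n, by linarith, by linarith, by ring, ?_⟩
      rw [hZ, he₂]
      simp only [Complex.real_smul]
      push_cast; ring
    have hmem_f : Z n ∈ chordSet (f (φ n)) := by
      rw [hfn n, mem_chordSet_iff]
      refine ⟨1 - T n, T n, by linarith, by linarith, by ring, ?_⟩
      rw [hz_f]
      simp only [Complex.real_smul, hA, hB]
      push_cast; ring
    have hnep : s(u,v) ≠ f (φ n) := by
      intro h
      rw [← h] at hne5n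
      exact lt_irrefl _ hne5n
    have hcross : Cross s(u,v) (f (φ n)) := by
      refine ⟨hnep, ⟨Z n, ⟨⟨hmem_p, hmem_f⟩, ?_⟩⟩⟩
      rw [openDisk, mem_ball_zero_iff]
      exact hZn
    exact Λ.no_cross s(u,v) hp (f (φ n)) (hf (φ n)) hcross

end Stmt5Aux
namespace Stmt5Aux

open Metric Filter Complex

/-- unconditional subsequence extraction for a sequence of chords -/
lemma chord_subseq (g : ℕ → Chord) : ∃ (φ : ℕ → ℕ) (α β : SPt), StrictMono φ ∧
    Tendsto (fun n => ((ept (g (φ n))).1 : ℂ)) atTop (nhds (α:ℂ)) ∧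
    Tendsto (fun n => ((ept (g (φ n))).2 : ℂ)) atTop (nhds (β:ℂ)) ∧
    Tendsto (fun n => chordDist (g (φ n)) s(α,β)) atTop (nhds 0) := by
  obtain ⟨p, φ, hφ, hconv⟩ := CompactSpace.tendsto_subseq (fun n => ept (g n))
  have h1 := tendsto_coe_of_tendsto ((continuous_fst.tendsto p).comp hconv)
  have h2 := tendsto_coe_of_tendsto ((continuous_snd.tendsto p).comp hconv)
  refine ⟨φ, p.1, p.2, hφ, h1, h2, ?_⟩
  have := tendsto_chordDist_mk (e₁ := fun n => (ept (g (φ n))).1)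
    (e₂ := fun n => (ept (g (φ n))).2) (a := p.1) (b := p.2) h1 h2
  convert this using 2 with n
  rw [← ept_spec (g (φ n))]

/-- the pullback family `G(ℓ)` -/
def Gset (Λ : Lamination) (ℓ : Chord) : Set Chord :=
  {q | q ∈ Λ.leaves ∧ ∃ k m : ℕ, (chordMap 3)^[k] q = (chordMap 3)^[m] ℓ ∧
    ¬ ((chordMap 3)^[m] ℓ).IsDiag}

/-- closure of `G(ℓ)` inside the leaf set -/
def Dset (Λ : Lamination) (ℓ : Chord) : Set Chord :=
  {q | q ∈ Λ.leaves ∧ ∀ ε > (0:ℝ), ∃ q' ∈ Gset Λ ℓ, chordDist q' q < ε}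

variable {Λ : Lamination} {ℓ : Chord}

lemma G_sub : Gset Λ ℓ ⊆ Λ.leaves := fun _ h => h.1

lemma D_sub : Dset Λ ℓ ⊆ Λ.leaves := fun _ h => h.1

lemma G_sub_D : Gset Λ ℓ ⊆ Dset Λ ℓ := fun q hq =>
  ⟨hq.1, fun ε hε => ⟨q, hq, by rw [chordDist_self]; exact hε⟩⟩

lemma ell_mem_G (hℓ : ℓ ∈ Λ.leaves) (hnd : ¬ ℓ.IsDiag) : ℓ ∈ Gset Λ ℓ :=
  ⟨hℓ, 0, 0, rfl, by simpa using hnd⟩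

lemma sib_mem_G {q s' : Chord} (hq : q ∈ Gset Λ ℓ) (hndq : ¬ (chordMap 3 q).IsDiag)
    (hs' : s' ∈ Λ.leaves) (hmap : chordMap 3 s' = chordMap 3 q) : s' ∈ Gset Λ ℓ := by
  obtain ⟨hqΛ, k, m, hkm, hm⟩ := hq
  cases k with
  | zero =>
    refine ⟨hs', 1, m + 1, ?_, ?_⟩
    · rw [Function.iterate_one, Function.iterate_succ_apply', ← hkm]
      simpa using hmap
    · rw [Function.iterate_succ_apply', ← hkm]
      simpa using hndq
  | succ k =>
    refine ⟨hs', k + 1, m, ?_, hm⟩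
    rw [Function.iterate_succ_apply, hmap, ← Function.iterate_succ_apply]
    exact hkm

lemma map_mem_G (hinv : Λ.Invariant 3) {q : Chord} (hq : q ∈ Gset Λ ℓ)
    (hndq : ¬ (chordMap 3 q).IsDiag) : chordMap 3 q ∈ Gset Λ ℓ := by
  obtain ⟨hqΛ, k, m, hkm, hm⟩ := hq
  cases k with
  | zero =>
    refine ⟨hinv.1 q hqΛ, 0, m + 1, ?_, ?_⟩
    · rw [Function.iterate_zero_apply, Function.iterate_succ_apply', ← hkm]
      simp
    · rw [Function.iterate_succ_apply', ← hkm]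
      simpa using hndq
  | succ k =>
    refine ⟨hinv.1 q hqΛ, k, m, ?_, hm⟩
    rw [← Function.iterate_succ_apply]
    exact hkm

lemma pre_mem_G {q p : Chord} (hq : q ∈ Gset Λ ℓ) (hp : p ∈ Λ.leaves)
    (hpq : chordMap 3 p = q) : p ∈ Gset Λ ℓ := by
  obtain ⟨hqΛ, k, m, hkm, hm⟩ := hq
  exact ⟨hp, k + 1, m, by rw [Function.iterate_succ_apply, hpq]; exact hkm, hm⟩

lemma lim_mem_D {f : ℕ → Chord} (hf : ∀ n, f n ∈ Gset Λ ℓ) {c : Chord}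
    (hlim : Tendsto (fun n => chordDist (f n) c) atTop (nhds 0)) : c ∈ Dset Λ ℓ := by
  refine ⟨leaves_closed Λ (fun n => (hf n).1) hlim, fun ε hε => ?_⟩
  obtain ⟨n, hn⟩ := (hlim.eventually (eventually_lt_nhds hε)).exists
  exact ⟨f n, hf n, hn⟩

lemma D_lim_mem_D {f : ℕ → Chord} (hf : ∀ n, f n ∈ Dset Λ ℓ) {c : Chord}
    (hlim : Tendsto (fun n => chordDist (f n) c) atTop (nhds 0)) : c ∈ Dset Λ ℓ := by
  refine ⟨leaves_closed Λ (fun n => (hf n).1) hlim, fun ε hε => ?_⟩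
  obtain ⟨n, hn⟩ := (hlim.eventually (eventually_lt_nhds (by linarith : (0:ℝ) < ε/2))).exists
  obtain ⟨q', hq', hd⟩ := (hf n).2 (ε/2) (by linarith)
  refine ⟨q', hq', ?_⟩
  calc chordDist q' c ≤ chordDist q' (f n) + chordDist (f n) c := chordDist_triangle _ _ _
    _ < ε/2 + ε/2 := by exact add_lt_add hd hn
    _ = ε := by ring

/-- the leaf set of the auxiliary sublamination -/
def L' (Λ : Lamination) (ℓ : Chord) : Set Chord := Dset Λ ℓ ∪ {c : Chord | c.IsDiag}

lemma L'_sub : L' Λ ℓ ⊆ Λ.leaves := by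
  rintro c (hc | hc)
  · exact D_sub hc
  · obtain ⟨z, rfl⟩ := isDiag_diag c hc
    exact diag_mem' Λ z

lemma L'_plus_isCompact : IsCompact (⋃ c ∈ L' Λ ℓ, chordSet c) := by
  apply Metric.isCompact_of_isClosed_isBounded
  · -- closedness, via sequences
    apply IsSeqClosed.isClosed
    intro x p hx hp
    have hsel : ∀ n, ∃ c ∈ L' Λ ℓ, x n ∈ chordSet c := by
      intro n
      simpa using Set.mem_iUnion₂.1 (hx n)
    choose g hg hgx using hsel
    obtain ⟨φ, α, β, hφ, hα, hβ, hgd⟩ := chord_subseq g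
    -- p belongs to the limit chord
    have hpmem : p ∈ chordSet s(α,β) := by
      have hinf : ∀ n, infDist (x (φ n)) (chordSet s(α,β)) ≤ chordDist (g (φ n)) s(α,β) :=
        fun n => infDist_le_hausdorffDist_of_mem (hgx (φ n)) (chord_edist_ne_top _ _)
      have hcont : Tendsto (fun n => infDist (x (φ n)) (chordSet s(α,β))) atTop
          (nhds (infDist p (chordSet s(α,β)))) :=
        ((continuous_infDist_pt (chordSet s(α,β))).tendsto p).comp (hp.comp hφ.tendsto_atTop)
      have hle : infDist p (chordSet s(α,β)) ≤ 0 := le_of_tendsto_of_tendsto' hcont hgd hinf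
      have : infDist p (chordSet s(α,β)) = 0 := le_antisymm hle infDist_nonneg
      exact ((chordSet_isClosed s(α,β)).mem_iff_infDist_zero (chordSet_nonempty _)).2 this
    by_cases hαβ : α = β
    · subst hαβ
      exact Set.mem_iUnion₂.2 ⟨s(α,α), Or.inr ((isDiag_mk α α).2 rfl), hpmem⟩
    · -- the limit chord is a nondegenerate element of D
      have hev : ∀ᶠ n in atTop, (ept (g (φ n))).1 ≠ (ept (g (φ n))).2 := by
        have := eventually_ne_of_tendsto hα hβ (coe_ne hαβ)
        filter_upwards [this] with n hn
        exact fun h => hn (by rw [h])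
      obtain ⟨N, hN⟩ := eventually_atTop.1 hev
      have hDmem : ∀ n, g (φ (n + N)) ∈ Dset Λ ℓ := by
        intro n
        rcases hg (φ (n + N)) with h | h
        · exact h
        · exfalso
          have hd : (s((ept (g (φ (n + N)))).1, (ept (g (φ (n + N)))).2)).IsDiag := by
            rw [← ept_spec]; exact h
          exact hN (n + N) (Nat.le_add_left N n) ((isDiag_mk _ _).1 hd)
      have hlim' : Tendsto (fun n => chordDist (g (φ (n + N))) s(α,β)) atTop (nhds 0) :=
        hgd.comp (tendsto_add_atTop_nat N)
      have : s(α,β) ∈ Dset Λ ℓ := D_lim_mem_D hDmem hlim'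
      exact Set.mem_iUnion₂.2 ⟨s(α,β), Or.inl this, hpmem⟩
  · -- boundedness
    apply (Metric.isBounded_closedBall (x := (0:ℂ)) (r := 1)).subset
    rintro z hz
    obtain ⟨c, -, hzc⟩ : ∃ c ∈ L' Λ ℓ, z ∈ chordSet c := by
      simpa using Set.mem_iUnion₂.1 hz
    rw [Metric.mem_closedBall, dist_zero_right]
    exact norm_le_one_of_mem hzc

end Stmt5Aux
namespace Stmt5Aux

open Metric Filter Complex

variable {Λ : Lamination} {ℓ : Chord}

/-- cube convergence of image chords -/
lemma tendsto_chordMap_aux {g : ℕ → Chord} {a b : SPt}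
    (hA : Tendsto (fun n => ((ept (g n)).1 : ℂ)) atTop (nhds (a:ℂ)))
    (hB : Tendsto (fun n => ((ept (g n)).2 : ℂ)) atTop (nhds (b:ℂ))) :
    Tendsto (fun n => chordDist (chordMap 3 (g n)) s(sigmaS 3 a, sigmaS 3 b)) atTop (nhds 0) := by
  have := tendsto_chordDist_mk (e₁ := fun n => sigmaS 3 (ept (g n)).1)
    (e₂ := fun n => sigmaS 3 (ept (g n)).2) (a := sigmaS 3 a) (b := sigmaS 3 b)
    (by simpa [sigma_coe] using hA.pow 3) (by simpa [sigma_coe] using hB.pow 3)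
  convert this using 2 with n
  have h := ept_spec (g n)
  set p := ept (g n) with hp
  rw [h, chordMap_mk]

lemma map_mem_L' (hinv : Λ.Invariant 3) {q : Chord} (hq : q ∈ L' Λ ℓ) :
    chordMap 3 q ∈ L' Λ ℓ := by
  rcases hq with hq | hq
  · by_cases hdq : (chordMap 3 q).IsDiag
    · exact Or.inr hdq
    · refine Or.inl ⟨hinv.1 q (D_sub hq), ?_⟩
      obtain ⟨f, hfG, hflim⟩ := approx_seq hq.2
      obtain ⟨φ, a, b, hφ, ha, hb, hqab, hcd⟩ := chord_approx_subseq hflim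
      have hmapq : chordMap 3 q = s(sigmaS 3 a, sigmaS 3 b) := by rw [hqab, chordMap_mk]
      have hab3 : ((a:ℂ))^3 ≠ ((b:ℂ))^3 := by
        intro h
        apply hdq
        rw [hmapq]
        exact (isDiag_mk _ _).2 (Subtype.ext h)
      have hcd3 : Tendsto (fun n => chordDist (chordMap 3 (f (φ n))) (chordMap 3 q))
          atTop (nhds 0) := by
        rw [hmapq]
        exact tendsto_chordMap_aux ha hb
      have hev : ∀ᶠ n in atTop, ¬ (chordMap 3 (f (φ n))).IsDiag := by
        have h3 := eventually_ne_of_tendsto (ha.pow 3) (hb.pow 3) hab3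
        filter_upwards [h3] with n hn
        intro hdiag
        rw [ept_spec (f (φ n)), chordMap_mk, isDiag_mk] at hdiag
        exact hn (congrArg (Subtype.val) hdiag)
      intro ε hε
      obtain ⟨n, hn1, hn2⟩ := ((hcd3.eventually (eventually_lt_nhds hε)).and hev).exists
      exact ⟨chordMap 3 (f (φ n)), map_mem_G hinv (hfG (φ n)) hn2, hn1⟩
  · exact Or.inr (chordMap_isDiag hq)

lemma pre_exists_L' (hinv : Λ.Invariant 3) {q : Chord} (hq : q ∈ L' Λ ℓ) :
    ∃ p ∈ L' Λ ℓ, chordMap 3 p = q := by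
  by_cases hdq : q.IsDiag
  · obtain ⟨z, rfl⟩ := isDiag_diag q hdq
    set w0 : ℂ := (z:ℂ) ^ (((3:ℕ):ℂ)⁻¹) with hw0
    have hw3 : w0 ^ 3 = (z:ℂ) := Complex.cpow_nat_inv_pow _ (by norm_num)
    have hwn : ‖w0‖ = 1 := by
      have h1 : ‖w0‖^3 = 1 := by
        rw [← norm_pow, hw3, z.2]
      have h2 : (0:ℝ) ≤ ‖w0‖ := norm_nonneg _
      nlinarith [sq_nonneg (‖w0‖ - 1), sq_nonneg (‖w0‖ + 1)]
    refine ⟨s(⟨w0, hwn⟩, ⟨w0, hwn⟩), Or.inr ((isDiag_mk _ _).2 rfl), ?_⟩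
    have hσ : sigmaS 3 (⟨w0, hwn⟩ : SPt) = z := Subtype.ext hw3
    rw [chordMap_mk, hσ]
  · have hqD : q ∈ Dset Λ ℓ := by
      rcases hq with h | h
      · exact h
      · exact absurd h hdq
    obtain ⟨f, hfG, hflim⟩ := approx_seq hqD.2
    choose P hP hPmap using fun n => hinv.2.1 (f n) (G_sub (hfG n))
    have hPG : ∀ n, P n ∈ Gset Λ ℓ := fun n => pre_mem_G (hfG n) (hP n) (hPmap n)
    obtain ⟨φ, α, β, hφ, hα, hβ, hPd⟩ := chord_subseq P
    have hD : s(α, β) ∈ Dset Λ ℓ := lim_mem_D (fun n => hPG (φ n)) hPd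
    have hmap1 : Tendsto (fun n => chordDist (chordMap 3 (P (φ n))) s(sigmaS 3 α, sigmaS 3 β))
        atTop (nhds 0) := tendsto_chordMap_aux hα hβ
    have hmap2 : Tendsto (fun n => chordDist (chordMap 3 (P (φ n))) q) atTop (nhds 0) := by
      have : (fun n => chordDist (chordMap 3 (P (φ n))) q)
          = fun n => chordDist (f (φ n)) q := by
        funext n; rw [hPmap (φ n)]
      rw [this]
      exact hflim.comp hφ.tendsto_atTop
    have heq : s(sigmaS 3 α, sigmaS 3 β) = q := chord_tendsto_unique hmap1 hmap2
    refine ⟨s(α, β), Or.inl hD, ?_⟩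
    rw [chordMap_mk, heq]

lemma sib_L' (hinv : Λ.Invariant 3) {q : Chord} (hq : q ∈ L' Λ ℓ)
    (hndq : ¬ (chordMap 3 q).IsDiag) :
    ∃ t : Fin 3 → Chord, (∃ i, t i = q) ∧ (∀ i, t i ∈ L' Λ ℓ) ∧ Function.Injective t ∧
      (∀ i j, i ≠ j → chordSet (t i) ∩ chordSet (t j) = ∅) ∧
      (∀ i, chordMap 3 (t i) = chordMap 3 q) := by
  have hqD : q ∈ Dset Λ ℓ := by
    rcases hq with h | h
    · exact h
    · exact absurd (chordMap_isDiag h) hndq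
  obtain ⟨f, hfG, hflim⟩ := approx_seq hqD.2
  obtain ⟨φ₁, a, b, hφ₁, ha, hb, hqab, hcd⟩ := chord_approx_subseq hflim
  have hmapq : chordMap 3 q = s(sigmaS 3 a, sigmaS 3 b) := by rw [hqab, chordMap_mk]
  have hab3 : ((a:ℂ))^3 ≠ ((b:ℂ))^3 := by
    intro h
    exact hndq (by rw [hmapq]; exact (isDiag_mk _ _).2 (Subtype.ext h))
  obtain ⟨N, hN⟩ := eventually_atTop.1
    (eventually_ne_of_tendsto (ha.pow 3) (hb.pow 3) hab3)
  -- shifted sequence, eventually nondegenerate image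
  set g : ℕ → Chord := fun n => f (φ₁ (n + N)) with hgdef
  have hgG : ∀ n, g n ∈ Gset Λ ℓ := fun n => hfG _
  have hglim : Tendsto (fun n => chordDist (g n) s(a,b)) atTop (nhds 0) :=
    hcd.comp (tendsto_add_atTop_nat N)
  have hE1 : Tendsto (fun n => ((ept (g n)).1 : ℂ)) atTop (nhds (a:ℂ)) :=
    ha.comp (tendsto_add_atTop_nat N)
  have hE2 : Tendsto (fun n => ((ept (g n)).2 : ℂ)) atTop (nhds (b:ℂ)) :=
    hb.comp (tendsto_add_atTop_nat N)
  have hcube : ∀ n, ((ept (g n)).1 : ℂ)^3 ≠ ((ept (g n)).2 : ℂ)^3 :=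
    fun n => hN (n + N) (Nat.le_add_left N n)
  have hnd_g : ∀ n, ¬ (chordMap 3 (g n)).IsDiag := by
    intro n hdiag
    rw [ept_spec (g n), chordMap_mk, isDiag_mk] at hdiag
    exact hcube n (congrArg Subtype.val hdiag)
  -- sibling systems for each n
  choose S hSex hSmem hSinj hSdisj hSmap using fun n => hinv.2.2 (g n) (G_sub (hgG n)) (hnd_g n)
  choose i0 hi0 using hSex
  set T : ℕ → Fin 3 → Chord := fun n => S n ∘ (Equiv.swap 0 (i0 n)) with hTdef
  have hT0 : ∀ n, T n 0 = g n := by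
    intro n
    show S n (Equiv.swap 0 (i0 n) 0) = g n
    rw [Equiv.swap_apply_left]
    exact hi0 n
  have hTmem : ∀ n i, T n i ∈ Λ.leaves := fun n i => hSmem n _
  have hTdisj : ∀ n i j, i ≠ j → chordSet (T n i) ∩ chordSet (T n j) = ∅ :=
    fun n i j hij => hSdisj n _ _ ((Equiv.swap 0 (i0 n)).injective.ne hij)
  have hTmap : ∀ n i, chordMap 3 (T n i) = chordMap 3 (g n) := fun n i => hSmap n _
  have hTG : ∀ n i, T n i ∈ Gset Λ ℓ :=
    fun n i => sib_mem_G (hgG n) (hnd_g n) (hTmem n i) (hTmap n i)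
  -- normalized endpoints of the siblings
  have hnorm : ∀ n i, ∃ u v : SPt, T n i = s(u, v) ∧
      ((u:ℂ))^3 = ((ept (g n)).1 : ℂ)^3 ∧ ((v:ℂ))^3 = ((ept (g n)).2 : ℂ)^3 := by
    intro n i
    obtain ⟨x, y, hxy⟩ := chord_rep (T n i)
    have hge : chordMap 3 (g n) = s(sigmaS 3 (ept (g n)).1, sigmaS 3 (ept (g n)).2) := by
      conv_lhs => rw [ept_spec (g n)]
      rfl
    have hmapeq : s(sigmaS 3 x, sigmaS 3 y)
        = s(sigmaS 3 (ept (g n)).1, sigmaS 3 (ept (g n)).2) := by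
      rw [← chordMap_mk, ← hxy, hTmap n i, hge]
    rw [Sym2.eq_iff] at hmapeq
    rcases hmapeq with ⟨h1, h2⟩ | ⟨h1, h2⟩
    · exact ⟨x, y, hxy, congrArg Subtype.val h1, congrArg Subtype.val h2⟩
    · exact ⟨y, x, hxy.trans (Sym2.eq_swap), congrArg Subtype.val h2, congrArg Subtype.val h1⟩
  choose U V hUV hU3 hV3 using hnorm
  -- subsequence along which all endpoints converge
  obtain ⟨F, φ₂, hφ₂, hconv⟩ :=
    CompactSpace.tendsto_subseq (fun n => (fun i : Fin 3 => (U n i, V n i)))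
  have hUc : ∀ i, Tendsto (fun n => ((U (φ₂ n) i : SPt) : ℂ)) atTop (nhds ((F i).1 : ℂ)) := by
    intro i
    exact tendsto_coe_of_tendsto ((continuous_fst.tendsto (F i)).comp (tendsto_pi_nhds.1 hconv i))
  have hVc : ∀ i, Tendsto (fun n => ((V (φ₂ n) i : SPt) : ℂ)) atTop (nhds ((F i).2 : ℂ)) := by
    intro i
    exact tendsto_coe_of_tendsto ((continuous_snd.tendsto (F i)).comp (tendsto_pi_nhds.1 hconv i))
  -- identify limit cubes
  have hU3lim : ∀ i, (((F i).1 : ℂ))^3 = ((a:ℂ))^3 := by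
    intro i
    have h1 : Tendsto (fun n => ((U (φ₂ n) i : SPt) : ℂ)^3) atTop (nhds (((F i).1 : ℂ)^3)) :=
      (hUc i).pow 3
    have h2 : Tendsto (fun n => ((U (φ₂ n) i : SPt) : ℂ)^3) atTop (nhds (((a:ℂ))^3)) := by
      have : (fun n => ((U (φ₂ n) i : SPt) : ℂ)^3)
          = fun n => ((ept (g (φ₂ n))).1 : ℂ)^3 := by
        funext n; exact hU3 (φ₂ n) i
      rw [this]
      exact (hE1.comp hφ₂.tendsto_atTop).pow 3
    exact tendsto_nhds_unique h1 h2
  have hV3lim : ∀ i, (((F i).2 : ℂ))^3 = ((b:ℂ))^3 := by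
    intro i
    have h1 : Tendsto (fun n => ((V (φ₂ n) i : SPt) : ℂ)^3) atTop (nhds (((F i).2 : ℂ)^3)) :=
      (hVc i).pow 3
    have h2 : Tendsto (fun n => ((V (φ₂ n) i : SPt) : ℂ)^3) atTop (nhds (((b:ℂ))^3)) := by
      have : (fun n => ((V (φ₂ n) i : SPt) : ℂ)^3)
          = fun n => ((ept (g (φ₂ n))).2 : ℂ)^3 := by
        funext n; exact hV3 (φ₂ n) i
      rw [this]
      exact (hE2.comp hφ₂.tendsto_atTop).pow 3
    exact tendsto_nhds_unique h1 h2
  -- distinctness of limit endpoints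
  have hUne : ∀ i j, i ≠ j → ((F i).1 : ℂ) ≠ ((F j).1 : ℂ) := by
    intro i j hij heq
    have hsep : ∀ n, Complex.normSq (((U n i : SPt) : ℂ) - ((U n j : SPt) : ℂ)) = 3 := by
      intro n
      apply normSq_sub_of_cube_eq (U n i).2 (U n j).2 ((hU3 n i).trans (hU3 n j).symm)
      intro h
      have hmem1 : ((U n i : SPt) : ℂ) ∈ chordSet (T n i) := by
        rw [hUV n i]; exact left_mem_chordSet _ _
      have hmem2 : ((U n i : SPt) : ℂ) ∈ chordSet (T n j) := by
        rw [hUV n j, h]; exact left_mem_chordSet _ _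
      have := hTdisj n i j hij
      rw [Set.eq_empty_iff_forall_notMem] at this
      exact this _ ⟨hmem1, hmem2⟩
    have hlim1 : Tendsto (fun n => Complex.normSq (((U (φ₂ n) i : SPt) : ℂ) - ((U (φ₂ n) j : SPt) : ℂ)))
        atTop (nhds (Complex.normSq (((F i).1 : ℂ) - ((F j).1 : ℂ)))) :=
      (Complex.continuous_normSq.tendsto _).comp ((hUc i).sub (hUc j))
    have hlim2 : Complex.normSq (((F i).1 : ℂ) - ((F j).1 : ℂ)) = 3 := by
      apply tendsto_nhds_unique hlim1
      have : (fun n => Complex.normSq (((U (φ₂ n) i : SPt) : ℂ) - ((U (φ₂ n) j : SPt) : ℂ)))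
          = fun _ => (3:ℝ) := by
        funext n; exact hsep (φ₂ n)
      rw [this]
      exact tendsto_const_nhds
    rw [heq, sub_self, map_zero] at hlim2
    norm_num at hlim2
  have hVne : ∀ i j, i ≠ j → ((F i).2 : ℂ) ≠ ((F j).2 : ℂ) := by
    intro i j hij heq
    have hsep : ∀ n, Complex.normSq (((V n i : SPt) : ℂ) - ((V n j : SPt) : ℂ)) = 3 := by
      intro n
      apply normSq_sub_of_cube_eq (V n i).2 (V n j).2 ((hV3 n i).trans (hV3 n j).symm)
      intro h
      have hmem1 : ((V n i : SPt) : ℂ) ∈ chordSet (T n i) := by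
        rw [hUV n i]; exact right_mem_chordSet _ _
      have hmem2 : ((V n i : SPt) : ℂ) ∈ chordSet (T n j) := by
        rw [hUV n j, h]; exact right_mem_chordSet _ _
      have := hTdisj n i j hij
      rw [Set.eq_empty_iff_forall_notMem] at this
      exact this _ ⟨hmem1, hmem2⟩
    have hlim1 : Tendsto (fun n => Complex.normSq (((V (φ₂ n) i : SPt) : ℂ) - ((V (φ₂ n) j : SPt) : ℂ)))
        atTop (nhds (Complex.normSq (((F i).2 : ℂ) - ((F j).2 : ℂ)))) :=
      (Complex.continuous_normSq.tendsto _).comp ((hVc i).sub (hVc j))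
    have hlim2 : Complex.normSq (((F i).2 : ℂ) - ((F j).2 : ℂ)) = 3 := by
      apply tendsto_nhds_unique hlim1
      have : (fun n => Complex.normSq (((V (φ₂ n) i : SPt) : ℂ) - ((V (φ₂ n) j : SPt) : ℂ)))
          = fun _ => (3:ℝ) := by
        funext n; exact hsep (φ₂ n)
      rw [this]
      exact tendsto_const_nhds
    rw [heq, sub_self, map_zero] at hlim2
    norm_num at hlim2
  have hUVne : ∀ i j, ((F i).1 : ℂ) ≠ ((F j).2 : ℂ) := by
    intro i j heq
    apply hab3
    rw [← hU3lim i, ← hV3lim j, heq]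
  -- the limit sibling system
  set t : Fin 3 → Chord := fun i => s((F i).1, (F i).2) with htdef
  have htlim : ∀ i, Tendsto (fun n => chordDist (T (φ₂ n) i) (t i)) atTop (nhds 0) := by
    intro i
    have := tendsto_chordDist_mk (e₁ := fun n => U (φ₂ n) i) (e₂ := fun n => V (φ₂ n) i)
      (a := (F i).1) (b := (F i).2) (hUc i) (hVc i)
    convert this using 2 with n
    rw [hUV (φ₂ n) i]
  have htD : ∀ i, t i ∈ Dset Λ ℓ := fun i => lim_mem_D (fun n => hTG (φ₂ n) i) (htlim i)
  have ht0 : t 0 = q := by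
    have h1 : Tendsto (fun n => chordDist (T (φ₂ n) 0) s(a,b)) atTop (nhds 0) := by
      have : (fun n => chordDist (T (φ₂ n) 0) s(a,b))
          = fun n => chordDist (g (φ₂ n)) s(a,b) := by
        funext n; rw [hT0 (φ₂ n)]
      rw [this]
      exact hglim.comp hφ₂.tendsto_atTop
    rw [hqab]
    exact chord_tendsto_unique (htlim 0) h1
  have htinj : Function.Injective t := by
    intro i j hij
    by_contra hne
    rw [htdef] at hij
    simp only [Sym2.eq_iff] at hij
    rcases hij with ⟨h1, _⟩ | ⟨h1, _⟩
    · exact hUne i j hne (congrArg Subtype.val h1)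
    · exact hUVne i j (congrArg Subtype.val h1)
  have htdisj : ∀ i j, i ≠ j → chordSet (t i) ∩ chordSet (t j) = ∅ := by
    intro i j hij
    rw [Set.eq_empty_iff_forall_notMem]
    rintro z ⟨hz1, hz2⟩
    have hzle : ‖z‖ ≤ 1 := norm_le_one_of_mem hz1
    rcases lt_or_eq_of_le hzle with hlt | heq1
    · -- crossing in the open disk
      have hcross : Cross (t i) (t j) := by
        refine ⟨fun h => hij (htinj h), ⟨z, ⟨⟨hz1, hz2⟩, ?_⟩⟩⟩
        rw [openDisk, mem_ball_zero_iff]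
        exact hlt
      exact Λ.no_cross (t i) (D_sub (htD i)) (t j) (D_sub (htD j)) hcross
    · -- a common endpoint is impossible
      set w : SPt := ⟨z, heq1⟩ with hwdef
      have h1 : w = (F i).1 ∨ w = (F i).2 := endpoint_of_norm_one hz1
      have h2 : w = (F j).1 ∨ w = (F j).2 := endpoint_of_norm_one hz2
      rcases h1 with h1 | h1 <;> rcases h2 with h2 | h2
      · exact hUne i j hij (congrArg Subtype.val (h1.symm.trans h2))
      · exact hUVne i j (congrArg Subtype.val (h1.symm.trans h2))
      · exact hUVne j i (congrArg Subtype.val (h2.symm.trans h1))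
      · exact hVne i j hij (congrArg Subtype.val (h1.symm.trans h2))
  have htmap : ∀ i, chordMap 3 (t i) = chordMap 3 q := by
    intro i
    have hσU : sigmaS 3 (F i).1 = sigmaS 3 a := Subtype.ext (hU3lim i)
    have hσV : sigmaS 3 (F i).2 = sigmaS 3 b := Subtype.ext (hV3lim i)
    rw [htdef, hmapq, chordMap_mk, hσU, hσV]
  exact ⟨t, ⟨0, ht0⟩, fun i => Or.inl (htD i), htinj, htdisj, htmap⟩

end Stmt5Aux
/-- in a chief `Λ` of a nonempty sibling `σ_3`-invariant
lamination, for any nondegenerate leaf `ℓ ∈ Λ`, the iterated pullbacks of the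
nondegenerate iterated images of `ℓ` are dense in `Λ`. -/
theorem stmt5 (Λ₀ Λ : Lamination) (h₀ : Λ₀.Invariant 3) (hne : Λ₀.NonemptyLam)
    (hchief : IsChiefOf 3 Λ Λ₀) (ℓ : Chord) (hℓ : ℓ ∈ Λ.leaves)
    (hnd : ¬ ℓ.IsDiag) :
    ∀ ℓ' ∈ Λ.leaves, ¬ ℓ'.IsDiag → ∀ ε > (0 : ℝ),
      ∃ q ∈ Λ.leaves,
        (∃ k m : ℕ, (chordMap 3)^[k] q = (chordMap 3)^[m] ℓ ∧
          ¬ ((chordMap 3)^[m] ℓ).IsDiag) ∧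
        chordDist q ℓ' < ε := by
  intro ℓ' hℓ' hnd' ε hε
  have hΛinv : Λ.Invariant 3 := hchief.2.1
  set Λ' : Lamination :=
    { leaves := Stmt5Aux.L' Λ ℓ
      no_cross := fun ℓ₁ h₁ ℓ₂ h₂ =>
        Λ.no_cross ℓ₁ (Stmt5Aux.L'_sub h₁) ℓ₂ (Stmt5Aux.L'_sub h₂)
      diag_mem := fun z => Or.inr (((Stmt5Aux.isDiag_mk z z).2 rfl : (s(z,z)).IsDiag))
      plus_compact := Stmt5Aux.L'_plus_isCompact } with hΛ'
  have hsub : Λ'.leaves ⊆ Λ.leaves := Stmt5Aux.L'_sub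
  have hinv' : Λ'.Invariant 3 :=
    ⟨fun q hq => Stmt5Aux.map_mem_L' hΛinv hq,
      fun q hq => Stmt5Aux.pre_exists_L' hΛinv hq,
      fun q hq hndq => Stmt5Aux.sib_L' hΛinv hq hndq⟩
  have hne' : Λ'.NonemptyLam :=
    ⟨ℓ, Or.inl (Stmt5Aux.G_sub_D (Stmt5Aux.ell_mem_G hℓ hnd)), hnd⟩
  have heq := hchief.2.2.2 Λ' hsub hinv' hne'
  have hℓ'L : ℓ' ∈ Stmt5Aux.L' Λ ℓ := by
    show ℓ' ∈ Λ'.leaves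
    rw [heq]
    exact hℓ'
  rcases hℓ'L with hD | hDiag
  · obtain ⟨q, hqG, hqd⟩ := hD.2 ε hε
    exact ⟨q, hqG.1, hqG.2, hqd⟩
  · exact absurd hDiag hnd'
end
end
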